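/- arXiv:2411.03574 — 7 statements merged into one kernel-verified Lean document; each statement's English description precedes it below -/
import Mathlib

section
/- Let α = s + it with s > 0 and t ∈ ℝ. Then there is a constant K (independent of q and n) such that |(q^α; q)_n| ≤ K (q^s; q)_n for all q ∈ (0,1) and n ∈ ℕ. -/
open Complex Finset

/-- Complex q-Pochhammer symbol `(a;q)_n = ∏_{k=0}^{n-1} (1 - a q^k)`. -/
noncomputable def qPochC (a q : ℂ) (n : ℕ) : ℂ := ∏ k ∈ range n, (1 - a * q ^ k)

/-- Real q-Pochhammer symbol. -/
noncomputable def qPochR (a q : ℝ) (n : ℕ) : ℝ := ∏ k ∈ range n, (1 - a * q ^ k)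

lemma expv (v : ℝ) (hv : 0 ≤ v) : Real.exp (-v) * v^2 ≤ (1 - Real.exp (-v))^2 := by
  have h1 : v / 2 ≤ Real.sinh (v/2) := Real.self_le_sinh_iff.2 (by linarith)
  have a : Real.exp (-(v/2)) * Real.exp (v/2) = 1 := by
    rw [← Real.exp_add]; simp
  have b : Real.exp (-(v/2)) * Real.exp (-(v/2)) = Real.exp (-v) := by
    rw [← Real.exp_add]; ring_nf
  have h2 : Real.exp (-(v/2)) * v ≤ 1 - Real.exp (-v) := by
    have := mul_le_mul_of_nonneg_left h1 (le_of_lt (Real.exp_pos (-(v/2))))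
    rw [Real.sinh_eq] at this
    nlinarith [this]
  have h3 : 0 ≤ Real.exp (-(v/2)) * v := by positivity
  calc Real.exp (-v) * v^2 = (Real.exp (-(v/2)) * v)^2 := by
        rw [mul_pow]; nlinarith [b]
    _ ≤ (1 - Real.exp (-v))^2 := pow_le_pow_left₀ h3 h2 2

lemma term_bound (t : ℝ) {q x : ℝ} (hq0 : 0 < q) (hq1 : q < 1) (hx : 0 < x) :
    ‖1 - (q:ℂ) ^ (Complex.mk x t)‖ ≤ Real.exp (t^2 / x^2 / 2) * (1 - q ^ x) := by
  set L := Real.log q with hLdef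
  have hLneg : L < 0 := Real.log_neg hq0 hq1
  set r := q ^ x with hrdef
  have hr : r = Real.exp (x * L) := by
    rw [hrdef, Real.rpow_def_of_pos hq0, mul_comm]
  have hrpos : 0 < r := Real.rpow_pos_of_pos hq0 x
  have hr1 : r ≤ 1 := Real.rpow_le_one hq0.le hq1.le hx.le
  have hz : (q:ℂ) ^ (Complex.mk x t) = (r : ℂ) * Complex.exp ((L*t) * Complex.I) := by
    rw [Complex.cpow_def_of_ne_zero (by exact_mod_cast hq0.ne')]
    rw [← Complex.ofReal_log hq0.le, Complex.mk_eq_add_mul_I]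
    rw [show (L:ℂ) * ((x:ℂ) + (t:ℂ)*Complex.I) = ((x*L : ℝ):ℂ) + (((L*t):ℝ):ℂ)*Complex.I by
      push_cast; ring]
    rw [Complex.exp_add, ← Complex.ofReal_exp, ← hr]
    push_cast
    ring_nf
  rw [hz]
  have hnorm : ‖1 - (r:ℂ) * Complex.exp (((L*t):ℂ) * Complex.I)‖
      = Real.sqrt ((1 - r * Real.cos (L*t))^2 + (r * Real.sin (L*t))^2) := by
    rw [Complex.norm_def]
    congr 1
    simp [Complex.normSq_apply, Complex.exp_re, Complex.exp_im]
    ring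
  rw [hnorm]
  have hr1' : 0 ≤ 1 - r := by linarith
  have hrhs : Real.exp (t^2 / x^2 / 2) * (1 - r)
      = Real.sqrt (Real.exp (t^2 / x^2) * (1 - r)^2) := by
    rw [Real.sqrt_mul (Real.exp_nonneg _), Real.sqrt_sq hr1', Real.exp_half]
  rw [hrhs]
  apply Real.sqrt_le_sqrt
  -- main inequality
  have hpy := Real.sin_sq_add_cos_sq (L*t)
  have hcos : 1 - (L*t)^2/2 ≤ Real.cos (L*t) := Real.one_sub_sq_div_two_le_cos
  have hev : Real.exp (x*L) * (x*L)^2 ≤ (1 - Real.exp (x*L))^2 := by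
    have := expv (-(x*L)) (by nlinarith)
    simpa using this
  have hx2 : (0:ℝ) < x^2 := by positivity
  have step : (1 - r * Real.cos (L*t))^2 + (r * Real.sin (L*t))^2 ≤ (1 + t^2/x^2)*(1-r)^2 := by
    rw [show (1 + t^2/x^2) = (x^2+t^2)/x^2 by field_simp, div_mul_eq_mul_div,
      le_div_iff₀ hx2]
    have hA : 2*r*(1-Real.cos (L*t)) ≤ r * (L*t)^2 := by nlinarith [hcos, hrpos.le]
    have hA2 := mul_le_mul_of_nonneg_right hA hx2.le
    have hB : r*(L*t)^2*x^2 ≤ t^2*(1-r)^2 := by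
      have h0 : r*(x*L)^2 ≤ (1-r)^2 := by rw [hr]; exact hev
      calc r*(L*t)^2*x^2 = (r*(x*L)^2)*t^2 := by ring
        _ ≤ (1-r)^2 * t^2 := mul_le_mul_of_nonneg_right h0 (sq_nonneg t)
        _ = t^2*(1-r)^2 := by ring
    have hpy2 : (r*Real.sin (L*t))^2*x^2 + (r*Real.cos (L*t))^2*x^2 = r^2*x^2 := by
      linear_combination (r^2*x^2) * hpy
    nlinarith [hA2, hB, hpy2]
  have h15 : (1:ℝ) + t^2/x^2 ≤ Real.exp (t^2/x^2) := by
    have := Real.add_one_le_exp (t^2/x^2); linarith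
  calc (1 - r * Real.cos (L*t))^2 + (r * Real.sin (L*t))^2 ≤ (1 + t^2/x^2)*(1-r)^2 := step
    _ ≤ Real.exp (t^2/x^2) * (1-r)^2 := mul_le_mul_of_nonneg_right h15 (sq_nonneg _)

lemma sum_bound (s : ℝ) (hs : 0 < s) (n : ℕ) :
    ∑ k ∈ range n, 1/(s+(k:ℝ))^2 ≤ 1/s^2 + 1/s := by
  have aux : ∀ m : ℕ, ∑ k ∈ range (m+1), 1/(s+(k:ℝ))^2 ≤ 1/s^2 + 1/s - 1/(s+m) := by
    intro m
    induction m with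
    | zero => simp
    | succ m ih =>
      rw [sum_range_succ]
      have hm : (0:ℝ) < s + m := by positivity
      have hm1 : (0:ℝ) < s + (m+1) := by positivity
      have key : 1/(s+((m+1:ℕ):ℝ))^2 ≤ 1/(s+(m:ℝ)) - 1/(s+((m:ℝ)+1)) := by
        push_cast
        have e : 1/(s+(m:ℝ)) - 1/(s+((m:ℝ)+1)) = 1/((s+m)*(s+m+1)) := by
          rw [div_sub_div _ _ (by positivity) (by positivity)]
          congr 1 <;> ring
        rw [e]
        apply one_div_le_one_div_of_le (by positivity)
        nlinarith
      push_cast at *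
      linarith
  rcases n with _ | m
  · simp; positivity
  · have := aux m
    have hm : (0:ℝ) < s + m := by positivity
    have : (0:ℝ) ≤ 1/(s+(m:ℝ)) := by positivity
    linarith [aux m]

/-- For `α = s + it` with `s > 0`, there is `K` with `|(q^α;q)_n| ≤ K (q^s;q)_n`
for all `q ∈ (0,1)` and `n ∈ ℕ`. -/
theorem abs_qPoch_le (s t : ℝ) (hs : 0 < s) :
    ∃ K : ℝ, ∀ q : ℝ, q ∈ Set.Ioo (0:ℝ) 1 → ∀ n : ℕ,
      ‖qPochC ((q : ℂ) ^ (Complex.mk s t)) q n‖ ≤ K * qPochR (q ^ s) q n := by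
  refine ⟨Real.exp (t^2/2 * (1/s^2 + 1/s)), ?_⟩
  rintro q ⟨hq0, hq1⟩ n
  have hterm : ∀ k : ℕ, ‖1 - (q:ℂ)^(Complex.mk s t) * (q:ℂ)^k‖
      ≤ Real.exp (t^2/(s+(k:ℝ))^2/2) * (1 - q^s * q^k) := by
    intro k
    have hxk : (0:ℝ) < s + (k:ℝ) := by positivity
    have hcomb : (q:ℂ)^(Complex.mk s t) * (q:ℂ)^k = (q:ℂ)^(Complex.mk (s+(k:ℝ)) t) := by
      rw [show Complex.mk (s+(k:ℝ)) t = Complex.mk s t + (k:ℕ) from by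
        apply Complex.ext <;> simp]
      rw [Complex.cpow_add _ _ (by exact_mod_cast hq0.ne'), Complex.cpow_natCast]
    rw [hcomb]
    have h := term_bound t hq0 hq1 hxk
    rwa [Real.rpow_add hq0, Real.rpow_natCast] at h
  have hfac : ∀ k : ℕ, (0:ℝ) ≤ 1 - q^s * q^k := by
    intro k
    have h1 : q^s ≤ 1 := (Real.rpow_le_one hq0.le hq1.le hs.le)
    have h2 : q^k ≤ 1 := pow_le_one₀ hq0.le hq1.le
    have h3 : 0 < q^s := Real.rpow_pos_of_pos hq0 s
    nlinarith [pow_pos hq0 k]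
  have hQ : (0:ℝ) ≤ qPochR (q ^ s) q n := prod_nonneg (fun k _ => hfac k)
  have h1 : ‖qPochC ((q:ℂ)^(Complex.mk s t)) q n‖
      = ∏ k ∈ range n, ‖1 - (q:ℂ)^(Complex.mk s t) * (q:ℂ)^k‖ := by
    rw [qPochC, norm_prod]
  have h2 : ∏ k ∈ range n, ‖1 - (q:ℂ)^(Complex.mk s t) * (q:ℂ)^k‖
      ≤ ∏ k ∈ range n, (Real.exp (t^2/(s+(k:ℝ))^2/2) * (1 - q^s * q^k)) :=
    prod_le_prod (fun k _ => norm_nonneg _) (fun k _ => hterm k)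
  rw [prod_mul_distrib, ← Real.exp_sum] at h2
  have hsum : ∑ k ∈ range n, t^2/(s+(k:ℝ))^2/2 ≤ t^2/2 * (1/s^2 + 1/s) := by
    have e : ∑ k ∈ range n, t^2/(s+(k:ℝ))^2/2
        = t^2/2 * ∑ k ∈ range n, 1/(s+(k:ℝ))^2 := by
      rw [mul_sum]; apply sum_congr rfl; intro k _; ring
    rw [e]
    apply mul_le_mul_of_nonneg_left (sum_bound s hs n) (by positivity)
  have hQe : ∏ k ∈ range n, (1 - q^s * q^k) = qPochR (q ^ s) q n := rfl
  rw [h1]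
  calc ∏ k ∈ range n, ‖1 - (q:ℂ)^(Complex.mk s t) * (q:ℂ)^k‖
      ≤ Real.exp (∑ k ∈ range n, t^2/(s+(k:ℝ))^2/2) * ∏ k ∈ range n, (1 - q^s * q^k) := h2
    _ ≤ Real.exp (t^2/2 * (1/s^2 + 1/s)) * qPochR (q ^ s) q n := by
        rw [hQe] at *
        exact mul_le_mul_of_nonneg_right (Real.exp_le_exp.2 hsum) hQ
end

section
/- Let 0 < β ≤ α. Then (q^α; q)_n / (q^β; q)_n ≤ (α)_n / (β)_n for all q ∈ (0,1) and n ∈ ℕ. -/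
open Finset

/-- Rising factorial `(α)_n = α(α+1)⋯(α+n-1)`. -/
noncomputable def pochR (α : ℝ) (n : ℕ) : ℝ := ∏ k ∈ range n, (α + k)

lemma key_ratio {a b q : ℝ} (hb : 0 < b) (hba : b ≤ a) (hq0 : 0 < q) (hq1 : q < 1) :
    (1 - q ^ a) / (1 - q ^ b) ≤ a / b := by
  have ha : 0 < a := hb.trans_le hba
  have hqa : q ^ a < 1 := Real.rpow_lt_one hq0.le hq1 ha
  have hqb : q ^ b < 1 := Real.rpow_lt_one hq0.le hq1 hb
  have hqa0 : 0 < q ^ a := Real.rpow_pos_of_pos hq0 a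
  have hs : (0:ℝ) < b / a := div_pos hb ha
  have hs1 : b / a ≤ 1 := (div_le_one ha).mpr hba
  have amgm : (q ^ a) ^ (b / a) ≤ (b / a) * (q ^ a) + (1 - b / a) := by
    have h := Real.geom_mean_le_arith_mean2_weighted (w₁ := b / a) (w₂ := 1 - b / a)
      (p₁ := q ^ a) (p₂ := 1) hs.le (by linarith) hqa0.le zero_le_one (by ring)
    simpa using h
  have hrw : (q ^ a) ^ (b / a) = q ^ b := by
    rw [← Real.rpow_mul hq0.le]
    congr 1
    field_simp
  rw [hrw] at amgm
  -- so q^b ≤ (b/a) * q^a + 1 - b/a, hence (b/a)(1 - q^a) ≤ 1 - q^b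
  rw [div_le_div_iff₀ (by linarith) hb]
  have h1 : (b / a) * (1 - q ^ a) ≤ 1 - q ^ b := by nlinarith
  have h2 : a * ((b / a) * (1 - q ^ a)) = (1 - q ^ a) * b := by
    field_simp
  nlinarith [mul_le_mul_of_nonneg_left h1 ha.le]

/-- For `0 < β ≤ α`: `(q^α;q)_n/(q^β;q)_n ≤ (α)_n/(β)_n` for `q ∈ (0,1)`, `n ∈ ℕ`. -/
theorem qPoch_ratio_le_poch_ratio (α β : ℝ) (hβ : 0 < β) (hβα : β ≤ α) :
    ∀ q : ℝ, q ∈ Set.Ioo (0:ℝ) 1 → ∀ n : ℕ,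
      qPochR (q ^ α) q n / qPochR (q ^ β) q n ≤ pochR α n / pochR β n := by
  rintro q ⟨hq0, hq1⟩ n
  have hα : 0 < α := hβ.trans_le hβα
  have key : ∀ x : ℝ, 0 < x → q ^ α * q ^ x = q ^ (α + x) := by
    intro x _; rw [Real.rpow_add hq0]
  have hterm : ∀ k : ℕ, 1 - q ^ α * q ^ k = 1 - q ^ (α + k) := by
    intro k
    rw [← Real.rpow_natCast q k, ← Real.rpow_add hq0]
  have htermβ : ∀ k : ℕ, 1 - q ^ β * q ^ k = 1 - q ^ (β + k) := by
    intro k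
    rw [← Real.rpow_natCast q k, ← Real.rpow_add hq0]
  have hposβ : ∀ k : ℕ, 0 < 1 - q ^ (β + k) := by
    intro k
    have : q ^ (β + (k:ℝ)) < 1 :=
      Real.rpow_lt_one hq0.le hq1 (by positivity)
    linarith
  have hposα : ∀ k : ℕ, 0 < 1 - q ^ (α + k) := by
    intro k
    have : q ^ (α + (k:ℝ)) < 1 :=
      Real.rpow_lt_one hq0.le hq1 (by positivity)
    linarith
  unfold qPochR pochR
  calc (∏ k ∈ range n, (1 - q ^ α * q ^ k)) / ∏ k ∈ range n, (1 - q ^ β * q ^ k)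
      = ∏ k ∈ range n, (1 - q ^ (α + k)) / (1 - q ^ (β + k)) := by
        rw [← prod_div_distrib]
        exact prod_congr rfl fun k _ => by rw [hterm, htermβ]
    _ ≤ ∏ k ∈ range n, (α + k) / (β + k) := by
        apply prod_le_prod
        · intro k _
          exact div_nonneg (hposα k).le (hposβ k).le
        · intro k _
          exact key_ratio (by positivity) (by linarith [Nat.cast_nonneg (α := ℝ) k]) hq0 hq1
    _ = (∏ k ∈ range n, (α + k)) / ∏ k ∈ range n, (β + k) := by rw [← prod_div_distrib]
end

section
/- For 0 < β ≤ α, the function f(q) = (1 - q^α)/(1 - q^β) is non-decreasing on (0,1), with limit α/β as q → 1⁻. -/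
open Real Set Filter
open scoped Topology

lemma key_amgm {α β q : ℝ} (hβ : 0 < β) (hβα : β ≤ α) (hq0 : 0 < q) :
    α ≤ β * q ^ (β - α) + (α - β) * q ^ β := by
  have hα : 0 < α := hβ.trans_le hβα
  have h := Real.geom_mean_le_arith_mean2_weighted
    (w₁ := β / α) (w₂ := (α - β) / α) (p₁ := q ^ (β - α)) (p₂ := q ^ β)
    (div_nonneg hβ.le hα.le) (div_nonneg (by linarith) hα.le)
    (Real.rpow_pos_of_pos hq0 (β - α)).le (Real.rpow_pos_of_pos hq0 β).le
    (by field_simp; ring)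
  have hgm : (q ^ (β - α)) ^ (β / α) * (q ^ β) ^ ((α - β) / α) = 1 := by
    rw [← Real.rpow_mul hq0.le, ← Real.rpow_mul hq0.le, ← Real.rpow_add hq0]
    rw [show (β - α) * (β / α) + β * ((α - β) / α) = 0 by field_simp; ring]
    exact Real.rpow_zero q
  rw [hgm] at h
  have := mul_le_mul_of_nonneg_left h hα.le
  calc α = α * 1 := (mul_one α).symm
    _ ≤ α * (β / α * q ^ (β - α) + (α - β) / α * q ^ β) := this
    _ = β * q ^ (β - α) + (α - β) * q ^ β := by field_simp

lemma hasDerivAt_ratio {α β q : ℝ} (hβ : 0 < β) (hβα : β ≤ α) (hq : q ∈ Set.Ioo (0:ℝ) 1) :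
    HasDerivAt (fun q : ℝ => (1 - q ^ α) / (1 - q ^ β))
      ((-(α * q ^ (α - 1)) * (1 - q ^ β) - (1 - q ^ α) * (-(β * q ^ (β - 1)))) /
        (1 - q ^ β) ^ 2) q := by
  have hu : HasDerivAt (fun q : ℝ => 1 - q ^ α) (-(α * q ^ (α - 1))) q :=
    (Real.hasDerivAt_rpow_const (Or.inl hq.1.ne')).const_sub 1
  have hv : HasDerivAt (fun q : ℝ => 1 - q ^ β) (-(β * q ^ (β - 1))) q :=
    (Real.hasDerivAt_rpow_const (Or.inl hq.1.ne')).const_sub 1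
  have hv0 : 1 - q ^ β ≠ 0 :=
    sub_ne_zero.2 (Real.rpow_lt_one hq.1.le hq.2 hβ).ne'
  exact hu.div hv hv0

lemma deriv_nonneg_ratio {α β q : ℝ} (hβ : 0 < β) (hβα : β ≤ α) (hq : q ∈ Set.Ioo (0:ℝ) 1) :
    0 ≤ (-(α * q ^ (α - 1)) * (1 - q ^ β) - (1 - q ^ α) * (-(β * q ^ (β - 1)))) /
        (1 - q ^ β) ^ 2 := by
  apply div_nonneg _ (sq_nonneg _)
  have e1 : q ^ (β - 1) = q ^ (α - 1) * q ^ (β - α) := by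
    rw [← Real.rpow_add hq.1]; ring_nf
  have e2 : q ^ (β - α) * q ^ α = q ^ β := by
    rw [← Real.rpow_add hq.1]; ring_nf
  have h0 : 0 ≤ q ^ (α - 1) * ((β * q ^ (β - α) + (α - β) * q ^ β) - α) :=
    mul_nonneg (Real.rpow_pos_of_pos hq.1 (α - 1)).le
      (by linarith [key_amgm hβ hβα hq.1])
  calc (0:ℝ) ≤ q ^ (α - 1) * ((β * q ^ (β - α) + (α - β) * q ^ β) - α) := h0
    _ = -(α * q ^ (α - 1)) * (1 - q ^ β) - (1 - q ^ α) * (-(β * q ^ (β - 1))) := by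
        rw [e1]; linear_combination (β * q ^ (α - 1)) * e2

/-- For `0 < β ≤ α`, `f(q) = (1-q^α)/(1-q^β)` is non-decreasing on `(0,1)`
and tends to `α/β` as `q → 1⁻`. -/
theorem monotone_one_sub_rpow_ratio (α β : ℝ) (hβ : 0 < β) (hβα : β ≤ α) :
    MonotoneOn (fun q : ℝ => (1 - q ^ α) / (1 - q ^ β)) (Set.Ioo (0:ℝ) 1) ∧
    Tendsto (fun q : ℝ => (1 - q ^ α) / (1 - q ^ β))
      (nhdsWithin 1 (Set.Iio (1:ℝ))) (nhds (α / β)) := by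
  have hα : 0 < α := hβ.trans_le hβα
  constructor
  · apply monotoneOn_of_deriv_nonneg (convex_Ioo 0 1)
    · intro x hx
      exact (hasDerivAt_ratio hβ hβα hx).continuousAt.continuousWithinAt
    · intro x hx
      rw [interior_Ioo] at hx
      exact (hasDerivAt_ratio hβ hβα hx).differentiableAt.differentiableWithinAt
    · intro x hx
      rw [interior_Ioo] at hx
      rw [(hasDerivAt_ratio hβ hβα hx).deriv]
      exact deriv_nonneg_ratio hβ hβα hx
  · -- the limit
    have slope_tendsto : ∀ γ : ℝ, 0 < γ →
        Tendsto (fun q : ℝ => (q ^ γ - 1) / (q - 1)) (𝓝[≠] (1:ℝ)) (𝓝 γ) := by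
      intro γ hγ
      have h : HasDerivAt (fun x : ℝ => x ^ γ) (γ * (1:ℝ) ^ (γ - 1)) 1 :=
        Real.hasDerivAt_rpow_const (Or.inl one_ne_zero)
      rw [Real.one_rpow, mul_one] at h
      have := hasDerivAt_iff_tendsto_slope.mp h
      refine this.congr (fun q => ?_)
      simp [slope_def_field, Real.one_rpow]
    have hmono : 𝓝[<] (1:ℝ) ≤ 𝓝[≠] (1:ℝ) :=
      nhdsWithin_mono 1 (fun x hx => ne_of_lt hx)
    have hdiv : Tendsto (fun q : ℝ =>
        ((q ^ α - 1) / (q - 1)) / ((q ^ β - 1) / (q - 1))) (𝓝[<] (1:ℝ)) (𝓝 (α / β)) :=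
      ((slope_tendsto α hα).mono_left hmono).div
        ((slope_tendsto β hβ).mono_left hmono) hβ.ne'
    refine hdiv.congr' ?_
    have hmem : Set.Ioo (0:ℝ) 1 ∈ 𝓝[<] (1:ℝ) := by
      apply Ioo_mem_nhdsLT_of_mem
      constructor <;> norm_num
    filter_upwards [hmem] with q hq
    have h1 : q - 1 ≠ 0 := sub_ne_zero.2 hq.2.ne
    have h2 : q ^ β - 1 ≠ 0 := sub_ne_zero.2 (Real.rpow_lt_one hq.1.le hq.2 hβ).ne
    have h3 : (1:ℝ) - q ^ β ≠ 0 := sub_ne_zero.2 (Real.rpow_lt_one hq.1.le hq.2 hβ).ne'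
    field_simp
    ring
end

section
/- Let 0 < α < β and τ > 0. There is a constant K independent of q and n such that (q^α; q)_n / (q^β; q)_n · q^{nτ} ≤ K (1+n)^{α-β} for all q ∈ (0,1) and n ∈ ℕ. -/
open Finset

lemma lemA (q x y : ℝ) (hq0 : 0 < q) (hq1 : q < 1) (hx : 0 < x) (hxy : x ≤ y) :
    x * (1 - q ^ y) ≤ y * (1 - q ^ x) := by
  have hy : 0 < y := lt_of_lt_of_le hx hxy
  have ht0 : 0 ≤ x / y := by positivity
  have ht1 : x / y ≤ 1 := by rw [div_le_one hy]; exact hxy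
  have hc := convexOn_exp.2 (Set.mem_univ (y * Real.log q)) (Set.mem_univ (0:ℝ))
      ht0 (show (0:ℝ) ≤ 1 - x / y by linarith) (show x / y + (1 - x / y) = 1 by ring)
  simp only [smul_eq_mul, mul_zero, add_zero, Real.exp_zero, mul_one] at hc
  have hxy' : x / y * (y * Real.log q) = x * Real.log q := by
    field_simp
  rw [hxy'] at hc
  have hqx : q ^ x = Real.exp (x * Real.log q) := by
    rw [Real.rpow_def_of_pos hq0, mul_comm]
  have hqy : q ^ y = Real.exp (y * Real.log q) := by
    rw [Real.rpow_def_of_pos hq0, mul_comm]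
  rw [hqx, hqy]
  have h2 := mul_le_mul_of_nonneg_left hc hy.le
  have h3 : y * (x / y * Real.exp (y * Real.log q) + (1 - x / y)) =
      x * Real.exp (y * Real.log q) + y - x := by
    field_simp; ring
  nlinarith [h2, h3]

lemma lemB (b : ℝ) (hb : 0 < b) (m : ℕ) :
    Real.log (b + m) - Real.log b ≤ ∑ k ∈ range m, 1 / (b + k) := by
  induction m with
  | zero => simp
  | succ m ih =>
    rw [Finset.sum_range_succ]
    have hbm : 0 < b + m := by positivity
    have h1 : Real.log (b + (m+1)) - Real.log (b + m) ≤ 1 / (b + m) := by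
      have := Real.log_le_sub_one_of_pos (show 0 < (b + (m+1)) / (b + m) by positivity)
      rw [Real.log_div (by positivity) (ne_of_gt hbm)] at this
      have : Real.log (b + (m+1)) - Real.log (b + m) ≤ (b + (m+1)) / (b + m) - 1 := this
      have he : (b + (m+1)) / (b + m) - 1 = 1 / (b + m) := by field_simp; ring
      linarith [this, he.le, he.ge]
    push_cast
    push_cast at ih
    linarith

-- sum of 1/(β+k) ≥ log(1+m) - max 0 (log β)
lemma lemC (b : ℝ) (hb : 0 < b) (m : ℕ) :
    Real.log (1 + m) - max 0 (Real.log b) ≤ ∑ k ∈ range m, 1 / (b + k) := by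
  refine le_trans ?_ (lemB b hb m)
  rcases le_or_gt b 1 with h | h
  · have h1 : Real.log b ≤ 0 := Real.log_nonpos hb.le h
    have hmax : max 0 (Real.log b) = 0 := max_eq_left h1
    rw [hmax]
    have : (1:ℝ) + m ≤ (b + m) / b := by
      rw [le_div_iff₀ hb]; nlinarith [Nat.cast_nonneg (α := ℝ) m]
    have := Real.log_le_log (by positivity) this
    rw [Real.log_div (by positivity) (ne_of_gt hb)] at this
    linarith
  · have hmax : max 0 (Real.log b) = Real.log b := max_eq_right (Real.log_nonneg h.le)
    rw [hmax]
    have : (1:ℝ) + m ≤ b + m := by linarith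
    have := Real.log_le_log (by positivity) this
    linarith

lemma lemD (q al be : ℝ) (hq0 : 0 < q) (hq1 : q < 1) (hα : 0 < al) (hαβ : al < be)
    (n m : ℕ) (hmn : m ≤ n) :
    Real.log (1 + (m:ℝ)) - max 0 (Real.log be) - (-Real.log q) * m
      ≤ ∑ k ∈ range n, q ^ (al + (k:ℝ)) / (be + k) := by
  have hbe : 0 < be := lt_trans hα hαβ
  have hlq : Real.log q ≤ 0 := Real.log_nonpos hq0.le hq1.le
  have hstep : ∀ k ∈ range m, 1 / (be + (k:ℝ)) + Real.log q ≤ q ^ (al + (k:ℝ)) / (be + k) := by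
    intro k _
    have hbk : (0:ℝ) < be + k := by positivity
    rw [div_add' _ _ _ (ne_of_gt hbk), div_le_div_iff₀ hbk hbk]
    have h1 : (al + k) * Real.log q + 1 ≤ q ^ (al + (k:ℝ)) := by
      rw [Real.rpow_def_of_pos hq0, mul_comm (Real.log q)]
      exact Real.add_one_le_exp _
    have h2 : (be + k) * Real.log q ≤ (al + k) * Real.log q := by
      nlinarith [Nat.cast_nonneg (α := ℝ) k]
    nlinarith
  have hsum := Finset.sum_le_sum hstep
  have hconst : ∑ _k ∈ range m, Real.log q = m * Real.log q := by
    rw [Finset.sum_const, card_range, nsmul_eq_mul]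
  rw [Finset.sum_add_distrib, hconst] at hsum
  have hC := lemC be hbe m
  have hmono : ∑ k ∈ range m, q ^ (al + (k:ℝ)) / (be + k)
      ≤ ∑ k ∈ range n, q ^ (al + (k:ℝ)) / (be + k) := by
    apply Finset.sum_le_sum_of_subset_of_nonneg (Finset.range_subset_range.2 hmn)
    intro k _ _
    have : (0:ℝ) < q ^ (al + (k:ℝ)) := Real.rpow_pos_of_pos hq0 _
    positivity
  linarith

lemma lemP (q al be : ℝ) (hq0 : 0 < q) (hq1 : q < 1) (hα : 0 < al) (hαβ : al < be) (n : ℕ) :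
    ∏ k ∈ range n, (1 - q ^ (al + (k:ℝ)))
      ≤ (∏ k ∈ range n, (1 - q ^ (be + (k:ℝ))))
        * Real.exp (-((be - al) * ∑ k ∈ range n, q ^ (al + (k:ℝ)) / (be + k))) := by
  have hbe : 0 < be := lt_trans hα hαβ
  have hd : 0 < be - al := by linarith
  have hfac : ∀ k ∈ range n, 1 - q ^ (al + (k:ℝ))
      ≤ (1 - q ^ (be + (k:ℝ))) * Real.exp (-((be - al) * (q ^ (al + (k:ℝ)) / (be + k)))) := by
    intro k _
    have hbk : (0:ℝ) < be + k := by positivity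
    have hak : (0:ℝ) < al + k := by positivity
    have hqak : 0 < q ^ (al + (k:ℝ)) := Real.rpow_pos_of_pos hq0 _
    have hqbk1 : q ^ (be + (k:ℝ)) < 1 := Real.rpow_lt_one hq0.le hq1 hbk
    have hA := lemA q (be - al) (be + k) hq0 hq1 hd (by nlinarith [Nat.cast_nonneg (α := ℝ) k])
    -- identity q^(al+k) * q^(be-al) = q^(be+k)
    have hid : q ^ (al + (k:ℝ)) * q ^ (be - al) = q ^ (be + (k:ℝ)) := by
      rw [← Real.rpow_add hq0]; ring_nf
    set u := (be - al) * (q ^ (al + (k:ℝ)) / (be + k)) with hu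
    have hexp : 1 - u ≤ Real.exp (-u) := by
      have := Real.add_one_le_exp (-u)
      linarith
    have hqbk0 : 0 < q ^ (be + (k:ℝ)) := Real.rpow_pos_of_pos hq0 _
    have hstep : 1 - q ^ (al + (k:ℝ)) ≤ (1 - q ^ (be + (k:ℝ))) * (1 - u) := by
      have h1 : (1 - q ^ (be + (k:ℝ))) * u ≤ q ^ (al + (k:ℝ)) * (1 - q ^ (be - al)) := by
        rw [hu]
        rw [div_eq_mul_inv]
        have h2 : (be - al) * (1 - q ^ (be + (k:ℝ))) ≤ (be + k) * (1 - q ^ (be - al)) := hA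
        have hbkinv : 0 < (be + (k:ℝ))⁻¹ := by positivity
        calc (1 - q ^ (be + (k:ℝ))) * ((be - al) * (q ^ (al + (k:ℝ)) * (be + (k:ℝ))⁻¹))
            = ((be - al) * (1 - q ^ (be + (k:ℝ)))) * (q ^ (al + (k:ℝ)) * (be + (k:ℝ))⁻¹) := by
              ring
          _ ≤ ((be + k) * (1 - q ^ (be - al))) * (q ^ (al + (k:ℝ)) * (be + (k:ℝ))⁻¹) := by
              apply mul_le_mul_of_nonneg_right h2; positivity
          _ = q ^ (al + (k:ℝ)) * (1 - q ^ (be - al)) := by field_simp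
      have h3 : q ^ (al + (k:ℝ)) * (1 - q ^ (be - al)) = q ^ (be + (k:ℝ)) - q ^ (al + (k:ℝ)) + (1 - q ^ (be + (k:ℝ))) - (1 - q ^ (al + (k:ℝ))) + (q ^ (al + (k:ℝ)) - q ^ (be + (k:ℝ))) := by
        rw [mul_sub, mul_one, hid]; ring
      nlinarith
    calc 1 - q ^ (al + (k:ℝ)) ≤ (1 - q ^ (be + (k:ℝ))) * (1 - u) := hstep
      _ ≤ (1 - q ^ (be + (k:ℝ))) * Real.exp (-u) := by
        apply mul_le_mul_of_nonneg_left hexp; linarith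
  have hnn : ∀ k ∈ range n, 0 ≤ 1 - q ^ (al + (k:ℝ)) := by
    intro k _
    have : q ^ (al + (k:ℝ)) < 1 := Real.rpow_lt_one hq0.le hq1 (by positivity)
    linarith
  calc ∏ k ∈ range n, (1 - q ^ (al + (k:ℝ)))
      ≤ ∏ k ∈ range n, ((1 - q ^ (be + (k:ℝ))) * Real.exp (-((be - al) * (q ^ (al + (k:ℝ)) / (be + k))))) :=
        Finset.prod_le_prod hnn hfac
    _ = (∏ k ∈ range n, (1 - q ^ (be + (k:ℝ)))) * ∏ k ∈ range n, Real.exp (-((be - al) * (q ^ (al + (k:ℝ)) / (be + k)))) :=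
        Finset.prod_mul_distrib
    _ = (∏ k ∈ range n, (1 - q ^ (be + (k:ℝ)))) * Real.exp (∑ k ∈ range n, -((be - al) * (q ^ (al + (k:ℝ)) / (be + k)))) := by
        rw [Real.exp_sum]
    _ = (∏ k ∈ range n, (1 - q ^ (be + (k:ℝ)))) * Real.exp (-((be - al) * ∑ k ∈ range n, q ^ (al + (k:ℝ)) / (be + k))) := by
        rw [Finset.mul_sum, ← Finset.sum_neg_distrib]

lemma lemE (dl τ Cb s : ℝ) (hδ : 0 < dl) (hτ : 0 < τ) (hCb : 0 ≤ Cb) (hs : 0 < s)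
    (n : ℕ) (S : ℝ)
    (hS : ∀ m : ℕ, m ≤ n → Real.log (1 + (m:ℝ)) - Cb - s * m ≤ S) :
    dl * Real.log (1 + (n:ℝ)) - dl * (Cb + 1 + |Real.log (τ / dl)| + Real.log 2)
      ≤ dl * S + s * n * τ := by
  have hlog2 : 0 ≤ Real.log 2 := Real.log_nonneg (by norm_num)
  have habs : 0 ≤ |Real.log (τ / dl)| := abs_nonneg _
  rcases le_or_gt (s * n) 1 with h | h
  · -- small s*n : take m = n
    have h1 := hS n le_rfl
    have h2 : 0 ≤ s * n * τ := by positivity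
    nlinarith [mul_le_mul_of_nonneg_left h1 hδ.le, mul_le_mul_of_nonneg_left h hδ.le]
  · -- large s*n : take m = floor (1/s)
    have hn1 : 1 ≤ n := by
      by_contra hc
      push_neg at hc
      interval_cases n <;> simp_all <;> linarith
    have hnR : (1:ℝ) ≤ (n:ℝ) := by exact_mod_cast hn1
    set m : ℕ := ⌊1/s⌋₊ with hm
    have hinv : (0:ℝ) < 1/s := by positivity
    have hmn : m ≤ n := by
      have h1 : (m:ℝ) ≤ 1/s := Nat.floor_le hinv.le
      have h2 : 1/s < (n:ℝ) := by
        rw [div_lt_iff₀ hs]; nlinarith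
      exact_mod_cast le_of_lt (lt_of_le_of_lt h1 h2)
    have hm1 : 1/s < 1 + (m:ℝ) := by
      have := Nat.lt_floor_add_one (1/s)
      push_cast at this; linarith
    have hsm : s * m ≤ 1 := by
      have h1 : (m:ℝ) ≤ 1/s := Nat.floor_le hinv.le
      calc s * m ≤ s * (1/s) := by nlinarith
        _ = 1 := by field_simp
    have hSm := hS m hmn
    have hlogm : -Real.log s ≤ Real.log (1 + (m:ℝ)) := by
      have := Real.log_le_log hinv hm1.le
      rwa [one_div, Real.log_inv] at this
    -- key : x ≥ 1 + log x with x = s*n*τ/dl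
    have hx : 0 < s * n * τ / dl := by positivity
    have hkey : Real.log (s * n * τ / dl) + 1 ≤ s * n * τ / dl := by
      have := Real.add_one_le_exp (Real.log (s * n * τ / dl))
      rwa [Real.exp_log hx] at this
    have hsplit : Real.log (s * n * τ / dl) = Real.log s + Real.log n + Real.log (τ / dl) := by
      have h1 : s * n * τ / dl = s * ((n:ℝ) * (τ / dl)) := by ring
      rw [h1, Real.log_mul (ne_of_gt hs) (by positivity),
        Real.log_mul (by positivity) (by positivity)]
      ring
    have hkey2 : dl * (1 + Real.log s + Real.log n + Real.log (τ / dl)) ≤ s * n * τ := by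
      rw [hsplit] at hkey
      have := mul_le_mul_of_nonneg_left hkey hδ.le
      calc dl * (1 + Real.log s + Real.log n + Real.log (τ / dl))
          = dl * (Real.log s + Real.log n + Real.log (τ / dl) + 1) := by ring
        _ ≤ dl * (s * n * τ / dl) := this
        _ = s * n * τ := by field_simp
    have hlogn : Real.log (1 + (n:ℝ)) ≤ Real.log 2 + Real.log n := by
      rw [← Real.log_mul (by norm_num) (by positivity)]
      exact Real.log_le_log (by positivity) (by nlinarith)
    have habs2 : -|Real.log (τ / dl)| ≤ Real.log (τ / dl) := neg_abs_le _
    nlinarith [mul_le_mul_of_nonneg_left hSm hδ.le,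
      mul_le_mul_of_nonneg_left hlogm hδ.le,
      mul_le_mul_of_nonneg_left hsm hδ.le,
      mul_le_mul_of_nonneg_left hlogn hδ.le,
      mul_le_mul_of_nonneg_left habs2 hδ.le]

/-- For `0 < α < β` and `τ > 0`, there is `K` with
`(q^α;q)_n/(q^β;q)_n · q^{nτ} ≤ K (1+n)^{α-β}` for all `q ∈ (0,1)`, `n ∈ ℕ`. -/
theorem qPoch_ratio_decay (α β τ : ℝ) (hα : 0 < α) (hαβ : α < β) (hτ : 0 < τ) :
    ∃ K : ℝ, ∀ q : ℝ, q ∈ Set.Ioo (0:ℝ) 1 → ∀ n : ℕ,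
      qPochR (q ^ α) q n / qPochR (q ^ β) q n * q ^ ((n : ℝ) * τ)
        ≤ K * (1 + (n : ℝ)) ^ (α - β) := by
  set dl : ℝ := β - α with hdl
  have hδ : 0 < dl := by simp [hdl]; linarith
  set Cb : ℝ := max 0 (Real.log β) with hCb
  have hCb0 : 0 ≤ Cb := le_max_left _ _
  set C : ℝ := dl * (Cb + 1 + |Real.log (τ / dl)| + Real.log 2) with hC
  refine ⟨Real.exp C, ?_⟩
  intro q hq n
  obtain ⟨hq0, hq1⟩ := hq
  have hlq : Real.log q < 0 := Real.log_neg hq0 hq1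
  set s : ℝ := -Real.log q with hsdef
  have hs : 0 < s := by simp [hsdef]; linarith
  set S : ℝ := ∑ k ∈ range n, q ^ (α + (k:ℝ)) / (β + k) with hSdef
  have hS : ∀ m : ℕ, m ≤ n → Real.log (1 + (m:ℝ)) - Cb - s * m ≤ S := by
    intro m hmn
    exact lemD q α β hq0 hq1 hα hαβ n m hmn
  have hE := lemE dl τ Cb s hδ hτ hCb0 hs n S hS
  -- rewrite the Pochhammer products
  have hnum : qPochR (q ^ α) q n = ∏ k ∈ range n, (1 - q ^ (α + (k:ℝ))) := by
    unfold qPochR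
    refine Finset.prod_congr rfl fun k _ => ?_
    rw [← Real.rpow_natCast q k, ← Real.rpow_add hq0]
  have hden : qPochR (q ^ β) q n = ∏ k ∈ range n, (1 - q ^ (β + (k:ℝ))) := by
    unfold qPochR
    refine Finset.prod_congr rfl fun k _ => ?_
    rw [← Real.rpow_natCast q k, ← Real.rpow_add hq0]
  have hdenpos : 0 < ∏ k ∈ range n, (1 - q ^ (β + (k:ℝ))) := by
    apply Finset.prod_pos
    intro k _
    have : q ^ (β + (k:ℝ)) < 1 :=
      Real.rpow_lt_one hq0.le hq1 (by linarith [Nat.cast_nonneg (α := ℝ) k, lt_trans hα hαβ])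
    linarith
  have hP := lemP q α β hq0 hq1 hα hαβ n
  have hratio : qPochR (q ^ α) q n / qPochR (q ^ β) q n ≤ Real.exp (-(dl * S)) := by
    rw [hnum, hden, div_le_iff₀ hdenpos, mul_comm]
    exact hP
  have hqpow : q ^ ((n:ℝ) * τ) = Real.exp (-(s * n * τ)) := by
    rw [Real.rpow_def_of_pos hq0]
    congr 1
    simp [hsdef]; ring
  have hEpos : (0:ℝ) < Real.exp (-(s * n * τ)) := Real.exp_pos _
  have hfin : qPochR (q ^ α) q n / qPochR (q ^ β) q n * q ^ ((n:ℝ) * τ)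
      ≤ Real.exp (-(dl * S + s * n * τ)) := by
    rw [hqpow]
    calc qPochR (q ^ α) q n / qPochR (q ^ β) q n * Real.exp (-(s * n * τ))
        ≤ Real.exp (-(dl * S)) * Real.exp (-(s * n * τ)) :=
          mul_le_mul_of_nonneg_right hratio hEpos.le
      _ = Real.exp (-(dl * S + s * n * τ)) := by rw [← Real.exp_add]; ring_nf
  refine le_trans hfin ?_
  have hrpow : (1 + (n:ℝ)) ^ (α - β) = Real.exp (-(dl * Real.log (1 + (n:ℝ)))) := by
    rw [Real.rpow_def_of_pos (by positivity)]
    congr 1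
    simp [hdl]; ring
  rw [hrpow, ← Real.exp_add]
  apply Real.exp_le_exp.2
  rw [hC]
  linarith
end

section
/- Let α, β ∈ ℂ with -β not a nonnegative integer, and let τ > 0. Then there exist q₀ ∈ (0,1) and a constant K such that |(q^α;q)_n| / |(q^β;q)_n| · q^{nτ} ≤ K (1+n)^{-Re(β-α)} for all q ∈ [q₀, 1) and n ∈ ℕ. -/
open Complex Finset

set_option maxHeartbeats 1000000

lemma expLin (w : ℂ) (hw : ‖w‖ ≤ 1) :
    ‖cexp w - 1 - w‖ ≤ 3/4 * ‖w‖^2 := by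
  have := Complex.exp_bound (x := w) hw (n := 2) (by norm_num)
  simp only [Finset.sum_range_succ, Finset.sum_range_zero, Nat.factorial] at this
  norm_num at this
  calc ‖cexp w - 1 - w‖ = ‖cexp w - (1 + w)‖ := by
        ring_nf
    _ ≤ ‖w‖ ^ 2 * (3/4) := this
    _ = 3/4 * ‖w‖^2 := by ring

lemma oneLtExpRe (w : ℂ) (hre : 0 < w.re) : 1 < ‖cexp w‖ := by
  rw [Complex.norm_exp]
  calc (1:ℝ) = Real.exp 0 := by simp
    _ < Real.exp w.re := Real.exp_lt_exp.mpr hre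

lemma expNeOne (w : ℂ) (hre : 0 < w.re) : cexp w ≠ 1 := by
  intro h
  have h1 := oneLtExpRe w hre
  rw [h] at h1; simp at h1

lemma expSubOneLowerBig (w : ℂ) (hre : 0 < w.re) (him : |w.im| ≤ 1/2)
    (hw : 1/2 ≤ ‖w‖) : (1 + ‖w‖)/20 ≤ ‖cexp w - 1‖ := by
  have habs : ‖w‖ ≤ w.re + |w.im| := by
    have := Complex.norm_le_abs_re_add_abs_im w
    calc ‖w‖ ≤ |w.re| + |w.im| := this
      _ = w.re + |w.im| := by rw [abs_of_pos hre]
  by_cases hx : (5/2:ℝ) ≤ w.re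
  · have h1 : ‖cexp w‖ - 1 ≤ ‖cexp w - 1‖ := by
      have := norm_sub_norm_le (cexp w) 1; simpa using this
    have h2 : ‖cexp w‖ = Real.exp w.re := by rw [Complex.norm_exp]
    have h3 : (1 + w.re/2)^2 ≤ Real.exp w.re := by
      have h5 := Real.add_one_le_exp (w.re/2)
      have e2 : Real.exp w.re = Real.exp (w.re/2) * Real.exp (w.re/2) := by
        rw [← Real.exp_add]; ring_nf
      nlinarith [Real.exp_pos (w.re/2)]
    have : 1 + ‖w‖ ≤ ‖cexp w‖ - 1 := by rw [h2]; nlinarith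
    linarith [norm_nonneg w]
  · push_neg at hx
    have hb : 1 + ‖w‖ ≤ 4 := by linarith
    by_cases hy : (3/10:ℝ) ≤ |w.im|
    · have h1 : |((cexp w - 1).im)| ≤ ‖cexp w - 1‖ := by
        exact Complex.abs_im_le_norm _
      have h2 : (cexp w - 1).im = Real.exp w.re * Real.sin w.im := by
        simp [Complex.exp_im]
      have hpi : (3:ℝ) < Real.pi := Real.pi_gt_three
      have him' := abs_le.mp him
      have h4 : |Real.sin w.im| = Real.sin |w.im| := by
        rcases le_or_gt 0 w.im with h | h
        · rw [_root_.abs_of_nonneg h,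
            _root_.abs_of_nonneg (Real.sin_nonneg_of_nonneg_of_le_pi h (by linarith [him'.2]))]
        · rw [_root_.abs_of_neg h, Real.sin_neg,
            _root_.abs_of_nonpos
              (Real.sin_nonpos_of_nonpos_of_neg_pi_le h.le (by linarith [him'.1]))]
      have hcube : |w.im|^3 ≤ (1/4) * |w.im| := by
        have hmm := mul_nonneg (mul_nonneg (abs_nonneg w.im)
          (by linarith : (0:ℝ) ≤ 1/2 - |w.im|)) (by linarith [abs_nonneg w.im] : (0:ℝ) ≤ 1/2 + |w.im|)
        nlinarith [abs_nonneg w.im]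
      have hsin : (28/100:ℝ) ≤ |Real.sin w.im| := by
        rw [h4]
        have := Real.sin_gt_sub_cube (x := |w.im|) (by linarith)
        nlinarith
      have hexp : (1:ℝ) ≤ Real.exp w.re := by
        rw [show (1:ℝ) = Real.exp 0 by simp]; exact Real.exp_le_exp.mpr hre.le
      have : (28/100:ℝ) ≤ ‖cexp w - 1‖ := by
        rw [h2] at h1
        rw [abs_mul, _root_.abs_of_pos (Real.exp_pos _)] at h1
        nlinarith [abs_nonneg (Real.sin w.im)]
      linarith
    · push_neg at hy
      have hx2 : (1/5:ℝ) ≤ w.re := by linarith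
      have h1 : ‖cexp w‖ - 1 ≤ ‖cexp w - 1‖ := by
        have := norm_sub_norm_le (cexp w) 1; simpa using this
      have h2 : ‖cexp w‖ = Real.exp w.re := by rw [Complex.norm_exp]
      have h3 : (21/100:ℝ) ≤ Real.exp w.re - 1 := by
        have h6 : Real.exp (1/5 : ℝ) ≤ Real.exp w.re := Real.exp_le_exp.mpr hx2
        have h5 := Real.add_one_le_exp (1/10:ℝ)
        have e2 : Real.exp (1/5:ℝ) = Real.exp (1/10:ℝ) * Real.exp (1/10:ℝ) := by
          rw [← Real.exp_add]; norm_num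
        nlinarith
      have : (21/100:ℝ) ≤ ‖cexp w - 1‖ := by rw [h2] at h1; linarith
      linarith

lemma hBound (w : ℂ) (hre : 0 < w.re) (him : |w.im| ≤ 1/2) :
    ‖1/(cexp w - 1) - 1/w‖ ≤ 100 / (1 + ‖w‖) := by
  have hw0 : w ≠ 0 := by intro h; rw [h] at hre; simp at hre
  have hwpos : 0 < ‖w‖ := norm_pos_iff.mpr hw0
  have hne : cexp w - 1 ≠ 0 := sub_ne_zero.mpr (expNeOne w hre)
  have hEpos : 0 < ‖cexp w - 1‖ := norm_pos_iff.mpr hne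
  by_cases hsmall : ‖w‖ ≤ 1/2
  · have heq : 1/(cexp w - 1) - 1/w = (w - (cexp w - 1))/((cexp w - 1) * w) := by
      rw [div_sub_div _ _ hne hw0]; ring_nf
    have hnum : ‖w - (cexp w - 1)‖ ≤ 3/4 * ‖w‖^2 := by
      have h8 := expLin w (by linarith)
      calc ‖w - (cexp w - 1)‖ = ‖-(cexp w - 1 - w)‖ := by ring_nf
        _ = ‖cexp w - 1 - w‖ := norm_neg _
        _ ≤ 3/4 * ‖w‖^2 := h8
    have hden : (5/8) * ‖w‖ ≤ ‖cexp w - 1‖ := by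
      have h4 := expLin w (by linarith)
      have h7 := norm_sub_norm_le w (-(cexp w - 1 - w))
      rw [norm_neg] at h7
      have e : w - -(cexp w - 1 - w) = cexp w - 1 := by ring
      rw [e] at h7
      nlinarith
    rw [heq, norm_div, norm_mul]
    have hub : ‖(w - (cexp w - 1))‖ / (‖cexp w - 1‖ * ‖w‖) ≤ 6/5 := by
      rw [div_le_iff₀ (by positivity)]
      nlinarith
    have : (6/5:ℝ) ≤ 100/(1+‖w‖) := by
      rw [le_div_iff₀ (by positivity)]; nlinarith
    linarith
  · push_neg at hsmall
    have h1 : ‖1/(cexp w - 1) - 1/w‖ ≤ 1/‖cexp w - 1‖ + 1/‖w‖ := by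
      calc ‖1/(cexp w - 1) - 1/w‖ ≤ ‖1/(cexp w - 1)‖ + ‖1/w‖ := norm_sub_le _ _
        _ = 1/‖cexp w - 1‖ + 1/‖w‖ := by rw [norm_div, norm_div]; simp
    have h2 : 1/‖w‖ ≤ 3/(1+‖w‖) := by
      rw [div_le_div_iff₀ hwpos (by positivity)]; linarith
    have h3 : 1/‖cexp w - 1‖ ≤ 20/(1+‖w‖) := by
      have := expSubOneLowerBig w hre him hsmall.le
      rw [div_le_div_iff₀ hEpos (by positivity)]
      nlinarith
    have h23 : (23:ℝ)/(1+‖w‖) ≤ 100/(1+‖w‖) := by gcongr <;> norm_num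
    have hc : 3/(1+‖w‖) + 20/(1+‖w‖) = 23/(1+‖w‖) := by ring
    linarith

lemma oneSubExpEq (w : ℂ) : 1 - cexp (-w) = w - (cexp (-w) - 1 - (-w)) := by ring

lemma oneSubExpUpper (w : ℂ) (hw : ‖w‖ ≤ 1/2) : ‖1 - cexp (-w)‖ ≤ 2 * ‖w‖ := by
  have h := expLin (-w) (by rw [norm_neg]; linarith)
  rw [norm_neg] at h
  rw [oneSubExpEq]
  have := norm_sub_le w (cexp (-w) - 1 - (-w))
  nlinarith [norm_nonneg w]

lemma oneSubExpLower (w : ℂ) (hw : ‖w‖ ≤ 1/2) : ‖w‖/2 ≤ ‖1 - cexp (-w)‖ := by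
  have h := expLin (-w) (by rw [norm_neg]; linarith)
  rw [norm_neg] at h
  rw [oneSubExpEq]
  have := norm_sub_norm_le w (cexp (-w) - 1 - (-w))
  nlinarith [norm_nonneg w]

lemma oneSubExpNeZero (w : ℂ) (hre : 0 < w.re) : 1 - cexp (-w) ≠ 0 := by
  intro h
  have h2 : cexp (-w) = 1 := by linear_combination -h
  have h3 : cexp w * cexp (-w) = cexp w := by rw [h2, mul_one]
  rw [← Complex.exp_add] at h3
  simp at h3
  exact expNeOne w hre h3.symm

lemma oneSubExpSlit (w : ℂ) (hre : 0 < w.re) : (1 - cexp (-w)) ∈ Complex.slitPlane := by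
  rw [Complex.mem_slitPlane_iff]
  left
  have h1 : (cexp (-w)).re ≤ ‖cexp (-w)‖ := Complex.re_le_norm _
  rw [Complex.norm_exp] at h1
  have h2 : Real.exp ((-w).re) < 1 := by
    rw [Complex.neg_re, ← Real.exp_zero]
    exact Real.exp_lt_exp.mpr (by linarith)
  simp only [Complex.sub_re, Complex.one_re]
  linarith

lemma logRatioBound (w₁ w₂ : ℂ) (ρ : ℝ) (hρ : 0 < ρ)
    (hseg : ∀ w ∈ segment ℝ w₂ w₁, ρ ≤ w.re ∧ |w.im| ≤ 1/2) :
    ‖1 - cexp (-w₁)‖ / ‖w₁‖ ≤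
      Real.exp (100/(1+ρ) * ‖w₁ - w₂‖) * (‖1 - cexp (-w₂)‖ / ‖w₂‖) := by
  set F : ℂ → ℂ := fun w => Complex.log (1 - cexp (-w)) - Complex.log w with hF
  set h' : ℂ → ℂ := fun w => cexp (-w)/(1 - cexp (-w)) - w⁻¹ with hh'
  have hder : ∀ w ∈ segment ℝ w₂ w₁, HasDerivAt F (h' w) w := by
    intro w hw
    obtain ⟨hwre, hwim⟩ := hseg w hw
    have hwre' : 0 < w.re := lt_of_lt_of_le hρ hwre
    have hw0 : w ≠ 0 := fun h => by rw [h] at hwre'; simp at hwre'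
    have h1 : HasDerivAt (fun z : ℂ => cexp (-z)) (-cexp (-w)) w := by
      have := (Complex.hasDerivAt_exp (-w)).comp w (hasDerivAt_neg w)
      simpa [mul_comm, Function.comp_def] using this
    have hexp : HasDerivAt (fun z : ℂ => 1 - cexp (-z)) (cexp (-w)) w := by
      simpa using h1.const_sub 1
    have term1 := hexp.clog (oneSubExpSlit w hwre')
    have term2 : HasDerivAt Complex.log w⁻¹ w :=
      Complex.hasDerivAt_log (by rw [Complex.mem_slitPlane_iff]; left; exact hwre')
    have := term1.sub (term2.comp w (hasDerivAt_id w))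
    simpa [hF, hh', div_eq_mul_inv, Pi.sub_def] using this
  have hnorm : ∀ w ∈ segment ℝ w₂ w₁, ‖h' w‖ ≤ 100/(1+ρ) := by
    intro w hw
    obtain ⟨hwre, hwim⟩ := hseg w hw
    have hwre' : 0 < w.re := lt_of_lt_of_le hρ hwre
    have hw0 : w ≠ 0 := fun h => by rw [h] at hwre'; simp at hwre'
    have hE : cexp w ≠ 0 := Complex.exp_ne_zero w
    have hE1 : cexp w - 1 ≠ 0 := sub_ne_zero.mpr (expNeOne w hwre')
    have heq : h' w = 1/(cexp w - 1) - 1/w := by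
      have : cexp (-w) / (1 - cexp (-w)) = 1/(cexp w - 1) := by
        rw [Complex.exp_neg]
        field_simp
      show cexp (-w) / (1 - cexp (-w)) - w⁻¹ = _
      rw [this, one_div w]
    rw [heq]
    calc ‖1/(cexp w - 1) - 1/w‖ ≤ 100/(1+‖w‖) := hBound w hwre' hwim
      _ ≤ 100/(1+ρ) := by
          apply div_le_div_of_nonneg_left (by norm_num) (by positivity)
          have : w.re ≤ ‖w‖ := by
            exact Complex.re_le_norm w
          linarith
  have hmvt : ‖F w₁ - F w₂‖ ≤ 100/(1+ρ) * ‖w₁ - w₂‖ := by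
    apply Convex.norm_image_sub_le_of_norm_hasFDerivWithin_le
      (f' := fun w => ContinuousLinearMap.smulRight (1 : ℂ →L[ℂ] ℂ) (h' w))
      (fun w hw => ((hder w hw).hasFDerivAt).hasFDerivWithinAt)
      (fun w hw => ?_) (convex_segment _ _)
      (left_mem_segment ℝ w₂ w₁) (right_mem_segment ℝ w₂ w₁)
    rw [ContinuousLinearMap.norm_smulRight_apply, norm_one, one_mul]
    exact hnorm w hw
  -- now convert to the real inequality
  have hre1 : 0 < w₁.re := lt_of_lt_of_le hρ (hseg w₁ (right_mem_segment ℝ w₂ w₁)).1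
  have hre2 : 0 < w₂.re := lt_of_lt_of_le hρ (hseg w₂ (left_mem_segment ℝ w₂ w₁)).1
  have hw10 : w₁ ≠ 0 := fun h => by rw [h] at hre1; simp at hre1
  have hw20 : w₂ ≠ 0 := fun h => by rw [h] at hre2; simp at hre2
  have ha1 : 0 < ‖1 - cexp (-w₁)‖ := norm_pos_iff.mpr (oneSubExpNeZero w₁ hre1)
  have ha2 : 0 < ‖1 - cexp (-w₂)‖ := norm_pos_iff.mpr (oneSubExpNeZero w₂ hre2)
  have hn1 : 0 < ‖w₁‖ := norm_pos_iff.mpr hw10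
  have hn2 : 0 < ‖w₂‖ := norm_pos_iff.mpr hw20
  have hFre : ∀ w : ℂ, (F w).re = Real.log ‖1 - cexp (-w)‖ - Real.log ‖w‖ := by
    intro w
    rw [hF]
    simp only [Complex.sub_re, Complex.log_re]
  have hrele : (F w₁ - F w₂).re ≤ ‖F w₁ - F w₂‖ := by
    exact Complex.re_le_norm _
  rw [Complex.sub_re, hFre w₁, hFre w₂] at hrele
  have key : Real.log ‖1 - cexp (-w₁)‖ - Real.log ‖w₁‖ ≤
      Real.log ‖1 - cexp (-w₂)‖ - Real.log ‖w₂‖ + 100/(1+ρ)*‖w₁ - w₂‖ := by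
    linarith
  calc ‖1 - cexp (-w₁)‖ / ‖w₁‖
      = Real.exp (Real.log ‖1 - cexp (-w₁)‖ - Real.log ‖w₁‖) := by
        rw [Real.exp_sub, Real.exp_log ha1, Real.exp_log hn1]
    _ ≤ Real.exp (Real.log ‖1 - cexp (-w₂)‖ - Real.log ‖w₂‖ + 100/(1+ρ)*‖w₁ - w₂‖) :=
        Real.exp_le_exp.mpr key
    _ = Real.exp (100/(1+ρ) * ‖w₁ - w₂‖) * (‖1 - cexp (-w₂)‖ / ‖w₂‖) := by
        rw [Real.exp_add, Real.exp_sub, Real.exp_log ha2, Real.exp_log hn2]; ring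

lemma harmSumAux (t : ℝ) (ht : 0 < t) :
    ∀ m : ℕ, ∑ j ∈ range m, t/(1+t*(j+1)) ≤ Real.log (1+t*m) := by
  intro m
  induction m with
  | zero => simp
  | succ m ih =>
    rw [Finset.sum_range_succ]
    have hpos1 : (0:ℝ) < 1 + t*m := by positivity
    have hpos2 : (0:ℝ) < 1 + t*((m:ℝ)+1) := by positivity
    have hstep : t/(1+t*((m:ℝ)+1)) ≤ Real.log (1+t*((m:ℝ)+1)) - Real.log (1+t*m) := by
      have hlog := Real.log_le_sub_one_of_pos (x := (1+t*(m:ℝ))/(1+t*((m:ℝ)+1))) (by positivity)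
      rw [Real.log_div (ne_of_gt hpos1) (ne_of_gt hpos2)] at hlog
      have he : (1+t*(m:ℝ))/(1+t*((m:ℝ)+1)) - 1 = -(t/(1+t*((m:ℝ)+1))) := by
        field_simp
        ring
      rw [he] at hlog
      linarith
    have hcast : ((m+1:ℕ):ℝ) = (m:ℝ)+1 := by push_cast; ring
    rw [hcast]
    linarith [ih]

lemma harmSum (t : ℝ) (ht : 0 < t) (ht1 : t ≤ 1) (m : ℕ) :
    ∑ j ∈ range m, t/(1+t*j) ≤ 1 + Real.log (1+t*m) := by
  cases m with
  | zero => simp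
  | succ m =>
    rw [Finset.sum_range_succ']
    have h2 : ∑ j ∈ range m, t/(1+t*(((j:ℕ)+1:ℕ):ℝ)) ≤ Real.log (1+t*m) := by
      have h1 := harmSumAux t ht m
      convert h1 using 3 with j hj
      push_cast; ring
    have hmono : Real.log (1+t*m) ≤ Real.log (1+t*((m:ℝ)+1)) := by
      apply Real.log_le_log (by positivity)
      nlinarith
    have hcast : ((m+1:ℕ):ℝ) = (m:ℝ)+1 := by push_cast; ring
    rw [hcast]
    have h0 : t/(1+t*((0:ℕ):ℝ)) = t := by norm_num
    rw [h0]
    linarith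

lemma logPowBound (c τ x : ℝ) (hc : 0 ≤ c) (hτ : 0 < τ) (hx : 0 ≤ x) :
    c * Real.log (1+x) ≤ τ*x + (τ + c^2/τ) := by
  have h1 : (0:ℝ) < 1 + x := by linarith
  set s := Real.sqrt (1+x) with hs
  have hs0 : 0 ≤ s := Real.sqrt_nonneg _
  have hs2 : s^2 = 1+x := Real.sq_sqrt h1.le
  have hspos : 0 < s := by nlinarith
  have hlog : Real.log (1+x) = 2 * Real.log s := by
    rw [← hs2, Real.log_pow]
    push_cast; ring
  have hls : Real.log s ≤ s := by
    have := Real.log_le_sub_one_of_pos hspos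
    linarith
  have key : 2*c*s ≤ τ*(1+x) + c^2/τ := by
    rw [← hs2]
    have h6 : c^2/τ*τ = c^2 := div_mul_cancel₀ _ (ne_of_gt hτ)
    nlinarith [sq_nonneg (τ*s - c), hτ]
  have : c * Real.log (1+x) ≤ 2*c*s := by
    rw [hlog]
    have := mul_le_mul_of_nonneg_left hls (by linarith : (0:ℝ) ≤ 2*c)
    nlinarith
  linarith

lemma aux_habs5 (A r x y : ℝ) (hA1 : 1 ≤ A) (hr0 : 0 ≤ r) (hx : |x| ≤ A)
    (hy2 : x^2 + y^2 ≤ A^2) : |r*(r+1) - ((x+r)^2 + y^2)| ≤ 4*A^2*(r+1) := by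
  have hx' := abs_le.mp hx
  have hA2 : 1 ≤ A^2 := by nlinarith
  have hS0 : 0 ≤ x^2 + y^2 := by positivity
  have hxr : |x*r| ≤ A*r := by
    rw [abs_mul, _root_.abs_of_nonneg hr0]
    exact mul_le_mul_of_nonneg_right hx hr0
  have hxr' := abs_le.mp hxr
  have hrA2 : r ≤ A^2*r := by nlinarith
  have hArA2 : A*r ≤ A^2*r := by nlinarith
  have hkey : r*(r+1) - ((x+r)^2 + y^2) = r - 2*(x*r) - (x^2+y^2) := by ring
  rw [hkey, abs_le]
  constructor <;> linarith

lemma normSqAdd (z : ℂ) (r : ℝ) : ‖z + (r:ℂ)‖^2 = (z.re + r)^2 + z.im^2 := by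
  rw [Complex.sq_norm, Complex.normSq_apply]
  simp
  ring

lemma pochArith (A r a c₆ D L : ℝ)
    (hA1 : 1 ≤ A) (hr3 : 3 ≤ r)
    (haA : |a| ≤ A) (hc₆ : |c₆| ≤ A^2)
    (hDlb : (r+1)^2/4 ≤ D)
    (hDub : |r*(r+1) - D| ≤ 4*A^2*(r+1))
    (hLv : 1/(r+2) ≤ L) (hLu : L ≤ 1/(r+1)) :
    (2*a*r + c₆)/D ≤ 2*a*L + 80*A^3*(1/(r+1) - 1/(r+2)) := by
  have p1 : (0:ℝ) < r+1 := by linarith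
  have p2 : (0:ℝ) < r+2 := by linarith
  have hDpos : 0 < D := lt_of_lt_of_le (by positivity) hDlb
  set u : ℝ := 1/(r+1) with hu
  set v : ℝ := 1/(r+2) with hv
  set P : ℝ := 1/D with hP
  have hupos : 0 < u := by rw [hu]; positivity
  have hvpos : 0 < v := by rw [hv]; positivity
  have hPpos : 0 < P := by rw [hP]; positivity
  have huvpos : 0 < u*v := mul_pos hupos hvpos
  have hu1 : u*(r+1) = 1 := by rw [hu]; field_simp
  have huv : u - v = u*v := by rw [hu, hv]; field_simp; ring
  have hu2v : u ≤ 2*v := by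
    have h2 : (1:ℝ)/(r+1) ≤ 2*(1/(r+2)) := by
      rw [show (2:ℝ)*(1/(r+2)) = 2/(r+2) by ring, div_le_div_iff₀ p1 p2]; linarith
    rw [hu, hv]; exact h2
  have husq : u^2 ≤ 2*(u*v) := by
    calc u^2 = u*u := sq u
      _ ≤ u*(2*v) := mul_le_mul_of_nonneg_left hu2v hupos.le
      _ = 2*(u*v) := by ring
  have hP4 : P ≤ 4*u^2 := by
    have h1 : 1/D ≤ 1/((r+1)^2/4) := one_div_le_one_div_of_le (by positivity) hDlb
    have h2 : 1/((r+1)^2/4) = 4*(1/(r+1))^2 := by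
      have hne : r+1 ≠ 0 := ne_of_gt p1
      field_simp
    rw [hP, hu]
    calc 1/D ≤ 1/((r+1)^2/4) := h1
      _ = 4*(1/(r+1))^2 := h2
  have hdiff : r*P - u = (r*(r+1) - D)*(P*u) := by
    have h1 : r+1 ≠ 0 := ne_of_gt p1
    have h2 : D ≠ 0 := ne_of_gt hDpos
    rw [hP, hu]; field_simp
  have hrPu : |r*P - u| ≤ 16*A^2*u^2 := by
    rw [hdiff, abs_mul, _root_.abs_of_nonneg (by positivity : (0:ℝ) ≤ P*u)]
    calc |r*(r+1) - D| * (P*u) ≤ (4*A^2*(r+1)) * (P*u) :=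
          mul_le_mul_of_nonneg_right hDub (by positivity)
      _ ≤ (4*A^2*(r+1)) * (4*u^2*u) := by
          apply mul_le_mul_of_nonneg_left _ (by positivity)
          exact mul_le_mul_of_nonneg_right hP4 hupos.le
      _ = 16*A^2*u^2*(u*(r+1)) := by ring
      _ = 16*A^2*u^2 := by rw [hu1]; ring
  have hrPu' := abs_le.mp hrPu
  have hA2 : 1 ≤ A^2 := by nlinarith
  have h16 : 16*A^2*u^2 ≤ 32*A^2*(u*v) := by
    have := mul_le_mul_of_nonneg_left husq (show (0:ℝ) ≤ 16*A^2 by positivity)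
    linarith
  have huvA : u*v ≤ A^2*(u*v) := by
    have := mul_le_mul_of_nonneg_right hA2 huvpos.le
    linarith
  have hrPL : |r*P - L| ≤ 33*A^2*(u*v) := by
    rw [abs_le]
    constructor
    · linarith
    · linarith
  have h2a : 2*a*(r*P) ≤ 2*a*L + 66*A^3*(u*v) := by
    have e1 : (2*a)*(r*P - L) ≤ |2*a| * |r*P - L| := by
      rw [← abs_mul]; exact le_abs_self _
    have h2aabs : |2*a| ≤ 2*A := by
      rw [abs_mul]
      have : |(2:ℝ)| = 2 := by norm_num
      rw [this]; linarith
    have e2 : |2*a| * |r*P - L| ≤ (2*A) * (33*A^2*(u*v)) :=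
      mul_le_mul h2aabs hrPL (abs_nonneg _) (by positivity)
    have e0 : 2*a*(r*P) = (2*a)*(r*P - L) + 2*a*L := by ring
    have e3 : (2*A)*(33*A^2*(u*v)) = 66*A^3*(u*v) := by ring
    linarith
  have hc6P : c₆*P ≤ 8*A^3*(u*v) := by
    have e1 : c₆*P ≤ |c₆| * P := mul_le_mul_of_nonneg_right (le_abs_self _) hPpos.le
    have e2 : |c₆| * P ≤ A^2*(4*u^2) := by
      have := mul_le_mul hc₆ hP4 hPpos.le (by positivity : (0:ℝ) ≤ A^2)
      linarith
    have e3 : A^2*(4*u^2) ≤ A^2*(8*(u*v)) :=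
      mul_le_mul_of_nonneg_left (by linarith) (by positivity)
    have e4 : A^2*(8*(u*v)) ≤ A^3*(8*(u*v)) :=
      mul_le_mul_of_nonneg_right (pow_le_pow_right₀ hA1 (by norm_num)) (by positivity)
    linarith
  have hgoalP : (2*a*r + c₆)/D = 2*a*(r*P) + c₆*P := by
    have h2 : D ≠ 0 := ne_of_gt hDpos
    rw [hP]; field_simp
  rw [hgoalP, huv]
  have hpos3 : 0 ≤ A^3*(u*v) := by positivity
  linarith

lemma pochFactor (α β : ℂ) (A : ℝ) (hA : ‖α‖ + ‖β‖ + 1 ≤ A) (k : ℕ) (hk : 3*A ≤ (k:ℝ)) :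
    ‖α + ((k:ℝ):ℂ)‖ / ‖β + ((k:ℝ):ℂ)‖ ≤
      Real.exp ((α-β).re * (Real.log ((k:ℝ)+2) - Real.log ((k:ℝ)+1))
        + (40*A^3) * (1/((k:ℝ)+1) - 1/((k:ℝ)+2))) := by
  have hnα := norm_nonneg α
  have hnβ := norm_nonneg β
  have hA1 : 1 ≤ A := by linarith
  set r : ℝ := (k:ℝ) with hr
  have hr3 : 3 ≤ r := by linarith
  have hrA : 2*A + 1 ≤ r := by linarith
  have hβre : |β.re| ≤ A :=
    le_trans (Complex.abs_re_le_norm β) (by linarith)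
  have hβre' := abs_le.mp hβre
  have hnα2 : α.re^2 + α.im^2 ≤ A^2 := by
    have h0 : α.re^2 + α.im^2 = ‖α‖^2 := by
      rw [Complex.sq_norm, Complex.normSq_apply]; ring
    rw [h0]; nlinarith
  have hnβ2 : β.re^2 + β.im^2 ≤ A^2 := by
    have h0 : β.re^2 + β.im^2 = ‖β‖^2 := by
      rw [Complex.sq_norm, Complex.normSq_apply]; ring
    rw [h0]; nlinarith
  set a : ℝ := (α-β).re with ha
  have haA : |a| ≤ A := by
    have h1 : |(α-β).re| ≤ ‖α-β‖ := Complex.abs_re_le_norm _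
    have h2 : ‖α-β‖ ≤ ‖α‖ + ‖β‖ := by
      exact norm_sub_le _ _
    rw [← ha] at h1
    linarith
  set N : ℝ := (α.re + r)^2 + α.im^2 with hNdef
  set D : ℝ := (β.re + r)^2 + β.im^2 with hDdef
  set c₆ : ℝ := N - D - 2*a*r with hc₆def
  have hc6eq : c₆ = (α.re^2 + α.im^2) - (β.re^2 + β.im^2) := by
    rw [hc₆def, hNdef, hDdef, ha]; simp only [Complex.sub_re]; ring
  have hc₆ : |c₆| ≤ A^2 := by
    rw [abs_le, hc6eq]
    constructor
    · nlinarith [sq_nonneg α.re, sq_nonneg α.im]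
    · nlinarith [sq_nonneg β.re, sq_nonneg β.im]
  have hDlb : (r+1)^2/4 ≤ D := by
    have h1 : (r+1)/2 ≤ β.re + r := by linarith
    rw [hDdef]; nlinarith [sq_nonneg β.im]
  have hDpos : 0 < D := lt_of_lt_of_le (by positivity) hDlb
  have hDub : |r*(r+1) - D| ≤ 4*A^2*(r+1) := by
    rw [hDdef]
    exact aux_habs5 A r β.re β.im hA1 (by linarith) hβre hnβ2
  have p1 : (0:ℝ) < r + 1 := by linarith
  have p2 : (0:ℝ) < r + 2 := by linarith
  set L : ℝ := Real.log (r+2) - Real.log (r+1) with hL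
  have hLu : L ≤ 1/(r+1) := by
    rw [hL]
    have h1 : Real.log (r+2) - Real.log (r+1) = Real.log ((r+2)/(r+1)) := by
      rw [Real.log_div (ne_of_gt p2) (ne_of_gt p1)]
    rw [h1]
    have h2 := Real.log_le_sub_one_of_pos (x := (r+2)/(r+1)) (by positivity)
    have h3 : (r+2)/(r+1) - 1 = 1/(r+1) := by field_simp; norm_num
    linarith
  have hLv : 1/(r+2) ≤ L := by
    rw [hL]
    have h1 : Real.log (r+1) - Real.log (r+2) = Real.log ((r+1)/(r+2)) := by
      rw [Real.log_div (ne_of_gt p1) (ne_of_gt p2)]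
    have h2 := Real.log_le_sub_one_of_pos (x := (r+1)/(r+2)) (by positivity)
    have h3 : (r+1)/(r+2) - 1 = -(1/(r+2)) := by field_simp; ring
    linarith [h1, h2, h3]
  have hmain : (2*a*r + c₆)/D ≤ 2*a*L + 80*A^3*(1/(r+1) - 1/(r+2)) :=
    pochArith A r a c₆ D L hA1 hr3 haA hc₆ hDlb hDub hLv hLu
  have hNnorm : ‖α + ((k:ℝ):ℂ)‖^2 = N := by rw [normSqAdd α r, hNdef]
  have hDnorm : ‖β + ((k:ℝ):ℂ)‖^2 = D := by rw [normSqAdd β r, hDdef]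
  set E : ℝ := a * L + (40*A^3) * (1/(r+1) - 1/(r+2)) with hE
  have hgoal2 : (‖α + ((k:ℝ):ℂ)‖ / ‖β + ((k:ℝ):ℂ)‖)^2 ≤ (Real.exp E)^2 := by
    rw [div_pow, hNnorm, hDnorm]
    have h1 : N/D = (N-D)/D + 1 := by field_simp; ring
    have h2 : (N-D)/D + 1 ≤ Real.exp ((N-D)/D) := Real.add_one_le_exp _
    have hND : N - D = 2*a*r + c₆ := by rw [hc₆def]; ring
    have h3 : Real.exp ((N-D)/D) ≤ Real.exp (2*E) := by
      apply Real.exp_le_exp.mpr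
      rw [hND, hE]; linarith
    have h4 : (Real.exp E)^2 = Real.exp (2*E) := by
      rw [sq, ← Real.exp_add]; ring_nf
    rw [h1, h4]
    linarith
  have hx : 0 ≤ ‖α + ((k:ℝ):ℂ)‖ / ‖β + ((k:ℝ):ℂ)‖ := by positivity
  calc ‖α + ((k:ℝ):ℂ)‖ / ‖β + ((k:ℝ):ℂ)‖
      = Real.sqrt ((‖α + ((k:ℝ):ℂ)‖ / ‖β + ((k:ℝ):ℂ)‖)^2) := (Real.sqrt_sq hx).symm
    _ ≤ Real.sqrt ((Real.exp E)^2) := Real.sqrt_le_sqrt hgoal2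
    _ = Real.exp E := Real.sqrt_sq (Real.exp_pos _).le

lemma normCmul (t : ℝ) (ht : 0 ≤ t) (z : ℂ) : ‖(t:ℂ)*z‖ = t*‖z‖ := by
  rw [norm_mul, Complex.norm_real, Real.norm_eq_abs, _root_.abs_of_nonneg ht]

lemma smallFactBound (ζα ζβ : ℂ) (t : ℝ) (ht : 0 < t)
    (hα2 : ‖(t:ℂ)*ζα‖ ≤ 1/2) (hβ2 : ‖(t:ℂ)*ζβ‖ ≤ 1/2) (hβ0 : ζβ ≠ 0) :
    ‖1 - cexp (-((t:ℂ)*ζα))‖ ≤ (‖ζα‖/‖ζβ‖ * 4) * ‖1 - cexp (-((t:ℂ)*ζβ))‖ := by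
  have h1 := oneSubExpUpper ((t:ℂ)*ζα) hα2
  have h2 := oneSubExpLower ((t:ℂ)*ζβ) hβ2
  rw [normCmul t ht.le] at h1 h2
  have hbpos : 0 < ‖ζβ‖ := norm_pos_iff.mpr hβ0
  have hbne : ‖ζβ‖ ≠ 0 := by exact ne_of_gt hbpos
  have hkey : (‖ζα‖/‖ζβ‖ * 4) * (t*‖ζβ‖/2) = 2*(t*‖ζα‖) := by
    field_simp [hbne]
    ring
  have hmono : (‖ζα‖/‖ζβ‖ * 4) * (t*‖ζβ‖/2) ≤ (‖ζα‖/‖ζβ‖ * 4) * ‖1 - cexp (-((t:ℂ)*ζβ))‖ :=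
    mul_le_mul_of_nonneg_left h2 (by positivity)
  linarith

lemma bigFactBound (α β : ℂ) (A : ℝ) (hαA : ‖α‖ ≤ A) (hβA : ‖β‖ ≤ A)
    (t : ℝ) (ht : 0 < t) (htA : t*A ≤ 1/2) (k : ℕ) (hk : A + 1 ≤ (k:ℝ)) :
    ‖1 - cexp (-((t:ℂ)*(α+k)))‖ ≤
      Real.exp ((100*‖α-β‖) * (t/(1+t*((k:ℝ)-A)))) *
        ((‖α+(k:ℂ)‖/‖β+(k:ℂ)‖) * ‖1 - cexp (-((t:ℂ)*(β+k)))‖) := by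
  have hA0 : 0 ≤ A := le_trans (norm_nonneg α) hαA
  set w₁ : ℂ := (t:ℂ)*(α+k) with hw₁
  set w₂ : ℂ := (t:ℂ)*(β+k) with hw₂
  have hαre := abs_le.mp (le_trans (Complex.abs_re_le_norm α) hαA)
  have hβre := abs_le.mp (le_trans (Complex.abs_re_le_norm β) hβA)
  have hαim : |α.im| ≤ A := le_trans (Complex.abs_im_le_norm α) hαA
  have hβim : |β.im| ≤ A := le_trans (Complex.abs_im_le_norm β) hβA
  have hρpos : 0 < t*((k:ℝ)-A) := by
    apply mul_pos ht; linarith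
  have hre2 : w₂.re = t*(β.re + k) := by
    rw [hw₂, Complex.re_ofReal_mul]; simp
  have hre1 : w₁.re = t*(α.re + k) := by
    rw [hw₁, Complex.re_ofReal_mul]; simp
  have him2 : w₂.im = t*β.im := by
    rw [hw₂, Complex.im_ofReal_mul]; simp
  have him1 : w₁.im = t*α.im := by
    rw [hw₁, Complex.im_ofReal_mul]; simp
  have hseg : ∀ w ∈ segment ℝ w₂ w₁, t*((k:ℝ)-A) ≤ w.re ∧ |w.im| ≤ 1/2 := by
    rintro w ⟨u, v, hu, hv, huv, rfl⟩
    constructor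
    · rw [Complex.add_re, Complex.smul_re, Complex.smul_re, hre2, hre1]
      simp only [smul_eq_mul]
      have b1 : t*((k:ℝ)-A) ≤ t*(β.re + k) := by
        apply mul_le_mul_of_nonneg_left _ ht.le; linarith [hβre.1]
      have b2 : t*((k:ℝ)-A) ≤ t*(α.re + k) := by
        apply mul_le_mul_of_nonneg_left _ ht.le; linarith [hαre.1]
      have h3 := add_le_add (mul_le_mul_of_nonneg_left b1 hu) (mul_le_mul_of_nonneg_left b2 hv)
      have h4 : u*(t*((k:ℝ)-A)) + v*(t*((k:ℝ)-A)) = t*((k:ℝ)-A) := by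
        linear_combination (t*((k:ℝ)-A))*huv
      linarith
    · rw [Complex.add_im, Complex.smul_im, Complex.smul_im, him2, him1]
      simp only [smul_eq_mul]
      have c1 : |u*(t*β.im)| ≤ u*(t*A) := by
        rw [abs_mul, abs_mul, _root_.abs_of_nonneg hu, _root_.abs_of_nonneg ht.le]
        exact mul_le_mul_of_nonneg_left (mul_le_mul_of_nonneg_left hβim ht.le) hu
      have c2 : |v*(t*α.im)| ≤ v*(t*A) := by
        rw [abs_mul, abs_mul, _root_.abs_of_nonneg hv, _root_.abs_of_nonneg ht.le]
        exact mul_le_mul_of_nonneg_left (mul_le_mul_of_nonneg_left hαim ht.le) hv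
      have c3 := abs_add_le (u*(t*β.im)) (v*(t*α.im))
      have c4 : u*(t*A) + v*(t*A) = t*A := by linear_combination (t*A)*huv
      linarith
  have hlog := logRatioBound w₁ w₂ (t*((k:ℝ)-A)) hρpos hseg
  have hnw₁ : ‖w₁‖ = t*‖α+(k:ℂ)‖ := by rw [hw₁, normCmul t ht.le]
  have hnw₂ : ‖w₂‖ = t*‖β+(k:ℂ)‖ := by rw [hw₂, normCmul t ht.le]
  have hn12 : ‖w₁ - w₂‖ = t*‖α-β‖ := by
    have : w₁ - w₂ = (t:ℂ)*(α-β) := by rw [hw₁, hw₂]; ring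
    rw [this, normCmul t ht.le]
  have hkre : (1:ℝ) ≤ (β+(k:ℂ)).re := by
    rw [Complex.add_re, Complex.natCast_re]
    linarith [hβre.1]
  have hbk : 0 < ‖β+(k:ℂ)‖ := by
    have := Complex.re_le_norm (β+(k:ℂ))
    linarith
  have hak : 0 < ‖α+(k:ℂ)‖ := by
    have hkre' : (1:ℝ) ≤ (α+(k:ℂ)).re := by
      rw [Complex.add_re, Complex.natCast_re]
      linarith [hαre.1]
    have := Complex.re_le_norm (α+(k:ℂ))
    linarith
  rw [hnw₁, hnw₂, hn12] at hlog
  have hexpeq : 100/(1+t*((k:ℝ)-A)) * (t*‖α-β‖) = (100*‖α-β‖) * (t/(1+t*((k:ℝ)-A))) := by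
    ring
  rw [hexpeq] at hlog
  have h5 : 0 < t*‖α+(k:ℂ)‖ := by positivity
  have h6 := (div_le_iff₀ h5).mp hlog
  calc ‖1 - cexp (-w₁)‖ ≤
      Real.exp ((100*‖α-β‖) * (t/(1+t*((k:ℝ)-A)))) * (‖1 - cexp (-w₂)‖ / (t*‖β+(k:ℂ)‖)) *
        (t*‖α+(k:ℂ)‖) := h6
    _ = Real.exp ((100*‖α-β‖) * (t/(1+t*((k:ℝ)-A)))) *
        ((‖α+(k:ℂ)‖/‖β+(k:ℂ)‖) * ‖1 - cexp (-w₂)‖) := by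
      have hbne2 : ‖β+(k:ℂ)‖ ≠ 0 := by exact ne_of_gt hbk
      have htne : t ≠ 0 := ne_of_gt ht
      field_simp [hbne2, htne]

lemma prodEBound (c₄ t : ℝ) (hc₄ : 0 ≤ c₄) (ht : 0 < t) (ht1 : t ≤ 1) (K₀ n : ℕ) :
    ∏ k ∈ range n, (if k < K₀ then (4:ℝ) else Real.exp (c₄*(t/(1+t*((k:ℝ)-(K₀:ℝ)))))) ≤
      4^K₀ * Real.exp (c₄*(1+Real.log (1+t*n))) := by
  have hlognn : 0 ≤ Real.log (1+t*n) := Real.log_nonneg (by nlinarith [Nat.cast_nonneg (α := ℝ) n, ht.le])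
  have hexp1 : 1 ≤ Real.exp (c₄*(1+Real.log (1+t*n))) :=
    Real.one_le_exp (mul_nonneg hc₄ (by linarith))
  by_cases hn : n ≤ K₀
  · have heq : ∏ k ∈ range n, (if k < K₀ then (4:ℝ) else Real.exp (c₄*(t/(1+t*((k:ℝ)-(K₀:ℝ)))))) = 4^n := by
      rw [Finset.prod_congr rfl (g := fun _ => (4:ℝ)) ?_, Finset.prod_const, Finset.card_range]
      intro k hk
      rw [if_pos (lt_of_lt_of_le (Finset.mem_range.mp hk) hn)]
    rw [heq]
    calc (4:ℝ)^n ≤ 4^K₀ := pow_le_pow_right₀ (by norm_num) hn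
      _ ≤ 4^K₀ * Real.exp (c₄*(1+Real.log (1+t*n))) :=
          le_mul_of_one_le_right (by positivity) hexp1
  · push_neg at hn
    rw [← Finset.prod_range_mul_prod_Ico _ hn.le]
    have h1 : ∏ k ∈ range K₀, (if k < K₀ then (4:ℝ) else Real.exp (c₄*(t/(1+t*((k:ℝ)-(K₀:ℝ)))))) = 4^K₀ := by
      rw [Finset.prod_congr rfl (g := fun _ => (4:ℝ)) ?_, Finset.prod_const, Finset.card_range]
      intro k hk
      rw [if_pos (Finset.mem_range.mp hk)]
    have h2 : ∏ k ∈ Ico K₀ n, (if k < K₀ then (4:ℝ) else Real.exp (c₄*(t/(1+t*((k:ℝ)-(K₀:ℝ)))))) =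
        Real.exp (∑ k ∈ Ico K₀ n, c₄*(t/(1+t*((k:ℝ)-(K₀:ℝ))))) := by
      rw [Real.exp_sum]
      apply Finset.prod_congr rfl
      intro k hk
      rw [if_neg (by simpa using (Finset.mem_Ico.mp hk).1)]
    have h3 : ∑ k ∈ Ico K₀ n, t/(1+t*((k:ℝ)-(K₀:ℝ))) ≤ 1 + Real.log (1+t*n) := by
      rw [Finset.sum_Ico_eq_sum_range]
      have hcongr : ∑ j ∈ range (n-K₀), t/(1+t*(((K₀+j:ℕ):ℝ)-(K₀:ℝ))) =
          ∑ j ∈ range (n-K₀), t/(1+t*(j:ℝ)) := by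
        apply Finset.sum_congr rfl
        intro j _
        congr 2
        push_cast
        ring
      rw [hcongr]
      calc ∑ j ∈ range (n-K₀), t/(1+t*(j:ℝ)) ≤ 1 + Real.log (1+t*((n-K₀:ℕ):ℝ)) :=
            harmSum t ht ht1 (n-K₀)
        _ ≤ 1 + Real.log (1+t*n) := by
            have hle : ((n-K₀:ℕ):ℝ) ≤ (n:ℝ) := by
              exact_mod_cast Nat.cast_le.mpr (Nat.sub_le n K₀)
            have := Real.log_le_log (by positivity : (0:ℝ) < 1+t*((n-K₀:ℕ):ℝ))
              (by nlinarith : 1+t*((n-K₀:ℕ):ℝ) ≤ 1+t*(n:ℝ))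
            linarith
    have h4 : ∑ k ∈ Ico K₀ n, c₄*(t/(1+t*((k:ℝ)-(K₀:ℝ)))) ≤ c₄*(1+Real.log (1+t*n)) := by
      rw [← Finset.mul_sum]
      exact mul_le_mul_of_nonneg_left h3 hc₄
    rw [h1, h2]
    exact mul_le_mul_of_nonneg_left (Real.exp_le_exp.mpr h4) (by positivity)

lemma prodQBound (α β : ℂ) (A : ℝ) (hA : ‖α‖ + ‖β‖ + 1 ≤ A) (K₀ : ℕ)
    (hK₀ : 3*A ≤ (K₀:ℝ)) (n : ℕ) :
    ∏ k ∈ range n, ‖α+(k:ℂ)‖/‖β+(k:ℂ)‖ ≤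
      (∏ k ∈ range K₀, max 1 (‖α+(k:ℂ)‖/‖β+(k:ℂ)‖)) *
        Real.exp ((α-β).re*Real.log ((n:ℝ)+1) + A*Real.log ((K₀:ℝ)+1) + 40*A^3) := by
  have hA1 : 1 ≤ A := by linarith [norm_nonneg α, norm_nonneg β]
  have haA : |(α-β).re| ≤ A := by
    have h1 : |(α-β).re| ≤ ‖α-β‖ := Complex.abs_re_le_norm _
    have h2 : ‖α-β‖ ≤ ‖α‖ + ‖β‖ := by
      exact norm_sub_le _ _
    linarith
  have haA' := abs_le.mp haA
  set C₈ : ℝ := ∏ k ∈ range K₀, max 1 (‖α+(k:ℂ)‖/‖β+(k:ℂ)‖) with hC₈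
  have honeleprod : ∀ s : Finset ℕ, (1:ℝ) ≤ ∏ k ∈ s, max 1 (‖α+(k:ℂ)‖/‖β+(k:ℂ)‖) := by
    intro s
    calc (1:ℝ) = ∏ _k ∈ s, 1 := by simp
      _ ≤ ∏ k ∈ s, max 1 (‖α+(k:ℂ)‖/‖β+(k:ℂ)‖) :=
        Finset.prod_le_prod (fun _ _ => zero_le_one) (fun k _ => le_max_left _ _)
  have hC₈1 : 1 ≤ C₈ := by rw [hC₈]; exact honeleprod _
  have hlogK : 0 ≤ Real.log ((K₀:ℝ)+1) := Real.log_nonneg (by linarith [Nat.cast_nonneg (α := ℝ) K₀])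
  have hQnn : ∀ k : ℕ, 0 ≤ ‖α+(k:ℂ)‖/‖β+(k:ℂ)‖ := fun k => by positivity
  by_cases hn : n ≤ K₀
  · have hlogn : Real.log ((n:ℝ)+1) ≤ Real.log ((K₀:ℝ)+1) := by
      apply Real.log_le_log (by positivity)
      have : (n:ℝ) ≤ (K₀:ℝ) := by exact_mod_cast hn
      linarith
    have hlognn : 0 ≤ Real.log ((n:ℝ)+1) := Real.log_nonneg (by linarith [Nat.cast_nonneg (α := ℝ) n])
    have habsmul : |(α-β).re * Real.log ((n:ℝ)+1)| ≤ A * Real.log ((K₀:ℝ)+1) := by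
      rw [abs_mul, _root_.abs_of_nonneg hlognn]
      exact mul_le_mul haA hlogn hlognn (by linarith)
    have hexp1 : 1 ≤ Real.exp ((α-β).re*Real.log ((n:ℝ)+1) + A*Real.log ((K₀:ℝ)+1) + 40*A^3) := by
      apply Real.one_le_exp
      have h9 := neg_abs_le ((α-β).re * Real.log ((n:ℝ)+1))
      have h10 : (0:ℝ) ≤ 40*A^3 := by positivity
      linarith
    calc ∏ k ∈ range n, ‖α+(k:ℂ)‖/‖β+(k:ℂ)‖
        ≤ ∏ k ∈ range n, max 1 (‖α+(k:ℂ)‖/‖β+(k:ℂ)‖) :=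
          Finset.prod_le_prod (fun k _ => hQnn k) (fun k _ => le_max_right _ _)
      _ ≤ C₈ := by
          rw [hC₈, ← Finset.prod_range_mul_prod_Ico
            (fun k : ℕ => max 1 (‖α+(k:ℂ)‖/‖β+(k:ℂ)‖)) hn]
          refine le_mul_of_one_le_right ?_ ?_
          · exact Finset.prod_nonneg (fun k _ => le_trans zero_le_one (le_max_left _ _))
          · calc (1:ℝ) = ∏ _k ∈ Finset.Ico n K₀, 1 := by simp
              _ ≤ _ := Finset.prod_le_prod (fun _ _ => zero_le_one) (fun k _ => le_max_left _ _)
      _ ≤ C₈ * Real.exp _ := le_mul_of_one_le_right (by linarith) hexp1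
  · push_neg at hn
    rw [← Finset.prod_range_mul_prod_Ico _ hn.le]
    have hpre : ∏ k ∈ range K₀, ‖α+(k:ℂ)‖/‖β+(k:ℂ)‖ ≤ C₈ :=
      Finset.prod_le_prod (fun k _ => hQnn k) (fun k _ => le_max_right _ _)
    -- suffix
    have hsuf1 : ∏ k ∈ Ico K₀ n, ‖α+(k:ℂ)‖/‖β+(k:ℂ)‖ ≤
        ∏ k ∈ Ico K₀ n, Real.exp ((α-β).re * (Real.log ((k:ℝ)+2) - Real.log ((k:ℝ)+1))
          + (40*A^3) * (1/((k:ℝ)+1) - 1/((k:ℝ)+2))) := by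
      apply Finset.prod_le_prod (fun k _ => hQnn k)
      intro k hk
      have hkK : K₀ ≤ k := (Finset.mem_Ico.mp hk).1
      have hk3A : 3*A ≤ (k:ℝ) := le_trans hK₀ (by exact_mod_cast hkK)
      have := pochFactor α β A hA k hk3A
      rwa [Complex.ofReal_natCast] at this
    have htel1 : ∑ k ∈ Ico K₀ n, (Real.log ((k:ℝ)+2) - Real.log ((k:ℝ)+1)) =
        Real.log ((n:ℝ)+1) - Real.log ((K₀:ℝ)+1) := by
      set f : ℕ → ℝ := fun j => Real.log ((j:ℝ)+1) with hf
      have hcongr : ∀ k : ℕ, Real.log ((k:ℝ)+2) - Real.log ((k:ℝ)+1) = f (k+1) - f k := by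
        intro k
        rw [hf]
        simp only
        have : ((k+1:ℕ):ℝ)+1 = (k:ℝ)+2 := by push_cast; ring
        rw [this]
      rw [Finset.sum_congr rfl (fun k _ => hcongr k)]
      rw [Finset.sum_Ico_eq_sub _ hn.le, Finset.sum_range_sub f, Finset.sum_range_sub f]
      show f n - f 0 - (f K₀ - f 0) = _
      rw [hf]
      simp
    have htel2 : ∑ k ∈ Ico K₀ n, (1/((k:ℝ)+1) - 1/((k:ℝ)+2)) =
        1/((K₀:ℝ)+1) - 1/((n:ℝ)+1) := by
      set g : ℕ → ℝ := fun j => -(1/((j:ℝ)+1)) with hg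
      have hcongr : ∀ k : ℕ, 1/((k:ℝ)+1) - 1/((k:ℝ)+2) = g (k+1) - g k := by
        intro k
        rw [hg]
        simp only
        have : ((k+1:ℕ):ℝ)+1 = (k:ℝ)+2 := by push_cast; ring
        rw [this]; ring
      rw [Finset.sum_congr rfl (fun k _ => hcongr k)]
      rw [Finset.sum_Ico_eq_sub _ hn.le, Finset.sum_range_sub g, Finset.sum_range_sub g]
      show g n - g 0 - (g K₀ - g 0) = _
      rw [hg]
      simp
      ring
    have hsuf2 : ∏ k ∈ Ico K₀ n, Real.exp ((α-β).re * (Real.log ((k:ℝ)+2) - Real.log ((k:ℝ)+1))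
          + (40*A^3) * (1/((k:ℝ)+1) - 1/((k:ℝ)+2))) ≤
        Real.exp ((α-β).re*Real.log ((n:ℝ)+1) + A*Real.log ((K₀:ℝ)+1) + 40*A^3) := by
      rw [← Real.exp_sum]
      apply Real.exp_le_exp.mpr
      rw [Finset.sum_add_distrib, ← Finset.mul_sum, ← Finset.mul_sum, htel1, htel2]
      have hb1 : (α-β).re * (Real.log ((n:ℝ)+1) - Real.log ((K₀:ℝ)+1)) ≤
          (α-β).re*Real.log ((n:ℝ)+1) + A*Real.log ((K₀:ℝ)+1) := by
        have h5 : -((α-β).re * Real.log ((K₀:ℝ)+1)) ≤ A * Real.log ((K₀:ℝ)+1) := by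
          have h6 : |(α-β).re * Real.log ((K₀:ℝ)+1)| ≤ A * Real.log ((K₀:ℝ)+1) := by
            rw [abs_mul, _root_.abs_of_nonneg hlogK]
            exact mul_le_mul_of_nonneg_right haA hlogK
          linarith [neg_abs_le ((α-β).re * Real.log ((K₀:ℝ)+1)), abs_le.mp h6]
        linarith [h5]
      have hb2 : (40*A^3) * (1/((K₀:ℝ)+1) - 1/((n:ℝ)+1)) ≤ 40*A^3 := by
        have hd : 1/((K₀:ℝ)+1) - 1/((n:ℝ)+1) ≤ 1 := by
          have h7 : 1/((K₀:ℝ)+1) ≤ 1 := by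
            rw [div_le_one (by positivity)]
            linarith [Nat.cast_nonneg (α := ℝ) K₀]
          have h8 : 0 ≤ 1/((n:ℝ)+1) := by positivity
          linarith
        calc (40*A^3) * (1/((K₀:ℝ)+1) - 1/((n:ℝ)+1)) ≤ (40*A^3) * 1 :=
              mul_le_mul_of_nonneg_left hd (by positivity)
          _ = 40*A^3 := mul_one _
      linarith
    have hsufnn : 0 ≤ ∏ k ∈ Ico K₀ n, ‖α+(k:ℂ)‖/‖β+(k:ℂ)‖ :=
      Finset.prod_nonneg (fun k _ => hQnn k)
    calc (∏ k ∈ range K₀, ‖α+(k:ℂ)‖/‖β+(k:ℂ)‖) * ∏ k ∈ Ico K₀ n, ‖α+(k:ℂ)‖/‖β+(k:ℂ)‖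
        ≤ C₈ * (Real.exp ((α-β).re*Real.log ((n:ℝ)+1) + A*Real.log ((K₀:ℝ)+1) + 40*A^3)) := by
          apply mul_le_mul hpre (le_trans hsuf1 hsuf2) hsufnn (by linarith)

/-- For `α, β ∈ ℂ` with `-β ∉ ℕ₀` and `τ > 0`, there exist `q₀ ∈ (0,1)` and `K` with
`|(q^α;q)_n|/|(q^β;q)_n| · q^{nτ} ≤ K (1+n)^{-Re(β-α)}` for all `q ∈ [q₀,1)`, `n ∈ ℕ`. -/


theorem qPoch_ratio_decay_complex (α β : ℂ) (hβ : ∀ m : ℕ, β ≠ -(m : ℂ)) (τ : ℝ)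
    (hτ : 0 < τ) :
    ∃ q₀ ∈ Set.Ioo (0:ℝ) 1, ∃ K : ℝ, ∀ q : ℝ, q ∈ Set.Ico q₀ 1 → ∀ n : ℕ,
      ‖qPochC ((q : ℂ) ^ α) q n‖ / ‖qPochC ((q : ℂ) ^ β) q n‖ * q ^ ((n : ℝ) * τ)
        ≤ K * (1 + (n : ℝ)) ^ (-(β - α).re) := by
  set A : ℝ := ‖α‖ + ‖β‖ + 1 with hAdef
  have hA1 : 1 ≤ A := by
    have := norm_nonneg α; have := norm_nonneg β
    rw [hAdef]; linarith
  have hA0 : 0 < A := by linarith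
  have hαA : ‖α‖ ≤ A := by have := norm_nonneg β; rw [hAdef]; linarith
  have hβA : ‖β‖ ≤ A := by have := norm_nonneg α; rw [hAdef]; linarith
  set K₀ : ℕ := ⌈3*A⌉₊ + 1 with hK₀def
  have hK₀A : 3*A ≤ (K₀:ℝ) := by
    rw [hK₀def]
    push_cast
    linarith [Nat.le_ceil (3*A)]
  have hK₀3 : (3:ℝ) ≤ (K₀:ℝ) := by linarith
  set t₀ : ℝ := 1/(2*(A + (K₀:ℝ))) with ht₀def
  have hAK : (0:ℝ) < A + (K₀:ℝ) := by positivity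
  have ht₀pos : 0 < t₀ := by rw [ht₀def]; positivity
  have ht₀1 : t₀ ≤ 1 := by
    rw [ht₀def, div_le_one (by positivity)]
    linarith
  have ht₀AK : t₀*(A+(K₀:ℝ)) = 1/2 := by
    rw [ht₀def]
    field_simp
  refine ⟨Real.exp (-t₀), ⟨Real.exp_pos _, Real.exp_lt_one_iff.mpr (by linarith)⟩, ?_⟩
  set c₄ : ℝ := 100*‖α - β‖ with hc₄def
  have hc₄0 : 0 ≤ c₄ := by rw [hc₄def]; positivity
  set C₈ : ℝ := ∏ k ∈ range K₀, max 1 (‖α+(k:ℂ)‖/‖β+(k:ℂ)‖) with hC₈def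
  have hC₈1 : 1 ≤ C₈ := by
    rw [hC₈def]
    calc (1:ℝ) = ∏ _k ∈ range K₀, 1 := by simp
      _ ≤ _ := Finset.prod_le_prod (fun _ _ => zero_le_one) (fun k _ => le_max_left _ _)
  refine ⟨C₈ * 4^K₀ *
    Real.exp (A*Real.log ((K₀:ℝ)+1) + 40*A^3 + c₄ + (τ + c₄^2/τ)), ?_⟩
  rintro q ⟨hq₀, hq1⟩ n
  have hq0 : 0 < q := lt_of_lt_of_le (Real.exp_pos _) hq₀
  set t : ℝ := -Real.log q with htdef
  have hlogq : Real.log q = -t := by rw [htdef]; ring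
  have htpos : 0 < t := by
    rw [htdef]
    have := Real.log_neg hq0 hq1
    linarith
  have htt₀ : t ≤ t₀ := by
    have h1 : Real.log (Real.exp (-t₀)) ≤ Real.log q := Real.log_le_log (Real.exp_pos _) hq₀
    rw [Real.log_exp] at h1
    rw [htdef]; linarith
  have ht1 : t ≤ 1 := le_trans htt₀ ht₀1
  -- factor representation
  have hfact : ∀ (z : ℂ) (k : ℕ), 1 - (q:ℂ)^z * (q:ℂ)^k = 1 - cexp (-((t:ℂ) * (z + k))) := by
    intro z k
    have hq0' : (q:ℂ) ≠ 0 := by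
      simp only [ne_eq, Complex.ofReal_eq_zero]
      exact ne_of_gt hq0
    rw [Complex.cpow_def_of_ne_zero hq0']
    have hqexp : (q:ℂ) = cexp ((Real.log q : ℝ):ℂ) := by
      rw [← Complex.ofReal_exp, Real.exp_log hq0]
    have hqk : (q:ℂ)^(k:ℕ) = cexp ((k:ℕ) * ((Real.log q : ℝ):ℂ)) := by
      rw [Complex.exp_nat_mul, ← hqexp]
    have hlogC : Complex.log (q:ℂ) = ((Real.log q : ℝ):ℂ) := (Complex.ofReal_log hq0.le).symm
    rw [hqk, hlogC, ← Complex.exp_add]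
    congr 2
    rw [hlogq]
    push_cast
    ring
  have hnum : ‖qPochC ((q:ℂ)^α) q n‖ = ∏ k ∈ range n, ‖1 - cexp (-((t:ℂ) * (α + k)))‖ := by
    rw [qPochC, norm_prod]
    exact Finset.prod_congr rfl (fun k _ => by rw [hfact α k])
  have hden : ‖qPochC ((q:ℂ)^β) q n‖ = ∏ k ∈ range n, ‖1 - cexp (-((t:ℂ) * (β + k)))‖ := by
    rw [qPochC, norm_prod]
    exact Finset.prod_congr rfl (fun k _ => by rw [hfact β k])
  have hβk0 : ∀ k : ℕ, β + (k:ℂ) ≠ 0 := by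
    intro k h
    exact hβ k (by linear_combination h)
  -- denominator factors positive
  have hsmallnorm : ∀ (z : ℂ), ‖z‖ ≤ A → ∀ k : ℕ, k < K₀ → ‖(t:ℂ)*(z + k)‖ ≤ 1/2 := by
    intro z hz k hk
    rw [normCmul t htpos.le]
    have h1 : ‖z + (k:ℂ)‖ ≤ A + (K₀:ℝ) := by
      calc ‖z + (k:ℂ)‖ ≤ ‖z‖ + ‖(k:ℂ)‖ := norm_add_le _ _
        _ ≤ A + (K₀:ℝ) := by
            have : ‖(k:ℂ)‖ = (k:ℝ) := by
              rw [Complex.norm_natCast]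
            rw [this]
            have : (k:ℝ) ≤ (K₀:ℝ) := by exact_mod_cast hk.le
            linarith
    calc t * ‖z + (k:ℂ)‖ ≤ t₀ * (A + (K₀:ℝ)) := by
          apply mul_le_mul htt₀ h1 (norm_nonneg _) ht₀pos.le
      _ = 1/2 := ht₀AK
  have hdenpos : ∀ k ∈ range n, 0 < ‖1 - cexp (-((t:ℂ) * (β + k)))‖ := by
    intro k _
    by_cases hk : k < K₀
    · have h2 := oneSubExpLower ((t:ℂ)*(β+k)) (hsmallnorm β hβA k hk)
      have h3 : 0 < ‖(t:ℂ)*(β+(k:ℂ))‖ := by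
        rw [norm_pos_iff]
        apply mul_ne_zero _ (hβk0 k)
        simp only [ne_eq, Complex.ofReal_eq_zero]
        exact ne_of_gt htpos
      linarith
    · push_neg at hk
      apply norm_pos_iff.mpr
      apply oneSubExpNeZero
      rw [Complex.re_ofReal_mul]
      apply mul_pos htpos
      have h4 : -A ≤ β.re := by
        have := abs_le.mp (le_trans (Complex.abs_re_le_norm β) hβA)
        exact this.1
      have h5 : (K₀:ℝ) ≤ (k:ℝ) := by exact_mod_cast hk
      simp only [Complex.add_re, Complex.natCast_re]
      linarith
  -- per-factor bound
  set Q : ℕ → ℝ := fun k => ‖α+(k:ℂ)‖/‖β+(k:ℂ)‖ with hQdef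
  set E : ℕ → ℝ := fun k => if k < K₀ then (4:ℝ) else Real.exp (c₄*(t/(1+t*((k:ℝ)-(K₀:ℝ))))) with hEdef
  have hper : ∀ k ∈ range n, ‖1 - cexp (-((t:ℂ) * (α + k)))‖ ≤
      (Q k * E k) * ‖1 - cexp (-((t:ℂ) * (β + k)))‖ := by
    intro k _
    by_cases hk : k < K₀
    · have h1 := smallFactBound (α+(k:ℂ)) (β+(k:ℂ)) t htpos
        (hsmallnorm α hαA k hk) (hsmallnorm β hβA k hk) (hβk0 k)
      rw [hQdef, hEdef]
      simp only [if_pos hk]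
      exact h1
    · push_neg at hk
      have hkA : A + 1 ≤ (k:ℝ) := by
        have h5 : (K₀:ℝ) ≤ (k:ℝ) := by exact_mod_cast hk
        nlinarith
      have htA2 : t*A ≤ 1/2 := by
        calc t*A ≤ t₀*(A+(K₀:ℝ)) := by
              apply mul_le_mul htt₀ (by linarith [Nat.cast_nonneg (α := ℝ) K₀]) (by linarith) ht₀pos.le
          _ = 1/2 := ht₀AK
      have h1 := bigFactBound α β A hαA hβA t htpos htA2 k hkA
      have h2 : Real.exp ((100*‖α-β‖) * (t/(1+t*((k:ℝ)-A)))) ≤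
          Real.exp (c₄*(t/(1+t*((k:ℝ)-(K₀:ℝ))))) := by
        apply Real.exp_le_exp.mpr
        rw [hc₄def]
        apply mul_le_mul_of_nonneg_left _ (by positivity)
        have h5 : (K₀:ℝ) ≤ (k:ℝ) := by exact_mod_cast hk
        have hy : 0 < 1+t*((k:ℝ)-(K₀:ℝ)) := by
          have := mul_nonneg htpos.le (sub_nonneg.mpr h5)
          linarith
        have hxy : 1+t*((k:ℝ)-(K₀:ℝ)) ≤ 1+t*((k:ℝ)-A) := by
          have hAK₀ : A ≤ (K₀:ℝ) := by linarith
          have := mul_le_mul_of_nonneg_left (sub_le_sub_left hAK₀ ((k:ℝ))) htpos.le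
          linarith
        exact div_le_div_of_nonneg_left htpos.le hy hxy
      rw [hQdef, hEdef]
      simp only [if_neg (not_lt.mpr hk)]
      calc ‖1 - cexp (-((t:ℂ) * (α + k)))‖ ≤
          Real.exp ((100*‖α-β‖) * (t/(1+t*((k:ℝ)-A)))) *
            ((‖α+(k:ℂ)‖/‖β+(k:ℂ)‖) * ‖1 - cexp (-((t:ℂ)*(β+k)))‖) := h1
        _ ≤ Real.exp (c₄*(t/(1+t*((k:ℝ)-(K₀:ℝ))))) *
            ((‖α+(k:ℂ)‖/‖β+(k:ℂ)‖) * ‖1 - cexp (-((t:ℂ)*(β+k)))‖) := by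
            apply mul_le_mul_of_nonneg_right h2
            positivity
        _ = _ := by ring
  -- assemble products
  have hprod : ∏ k ∈ range n, ‖1 - cexp (-((t:ℂ) * (α + k)))‖ ≤
      ((∏ k ∈ range n, Q k) * (∏ k ∈ range n, E k)) *
        ∏ k ∈ range n, ‖1 - cexp (-((t:ℂ) * (β + k)))‖ := by
    calc ∏ k ∈ range n, ‖1 - cexp (-((t:ℂ) * (α + k)))‖
        ≤ ∏ k ∈ range n, ((Q k * E k) * ‖1 - cexp (-((t:ℂ) * (β + k)))‖) :=
          Finset.prod_le_prod (fun k _ => norm_nonneg _) hper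
      _ = ((∏ k ∈ range n, Q k) * (∏ k ∈ range n, E k)) *
          ∏ k ∈ range n, ‖1 - cexp (-((t:ℂ) * (β + k)))‖ := by
          rw [← Finset.prod_mul_distrib, ← Finset.prod_mul_distrib]
  have hdenprodpos : 0 < ∏ k ∈ range n, ‖1 - cexp (-((t:ℂ) * (β + k)))‖ :=
    Finset.prod_pos hdenpos
  -- rpow of q
  have hqpow : q ^ ((n:ℝ)*τ) = Real.exp (-(τ*(t*(n:ℝ)))) := by
    rw [Real.rpow_def_of_pos hq0, hlogq]
    congr 1
    ring
  -- final bound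
  have hEbound := prodEBound c₄ t hc₄0 htpos ht1 K₀ n
  have hQbound := prodQBound α β A (le_refl A) K₀ hK₀A n
  rw [hnum, hden, hqpow]
  rw [div_mul_eq_mul_div, div_le_iff₀ hdenprodpos]
  have hrpow : (1 + (n:ℝ)) ^ (-(β - α).re) = Real.exp ((α-β).re * Real.log ((n:ℝ)+1)) := by
    rw [Real.rpow_def_of_pos (by positivity)]
    have e1 : -(β-α).re = (α-β).re := by simp only [Complex.sub_re]; ring
    have e2 : (1:ℝ) + (n:ℝ) = (n:ℝ)+1 := by ring
    rw [e1, e2, mul_comm]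
  have hLP := logPowBound c₄ τ (t*(n:ℝ)) hc₄0 hτ (by positivity)
  have hEQnn1 : 0 ≤ ∏ k ∈ range n, Q k := Finset.prod_nonneg (fun k _ => by rw [hQdef]; positivity)
  have hEQnn2 : 0 ≤ ∏ k ∈ range n, E k := by
    apply Finset.prod_nonneg
    intro k _
    rw [hEdef]
    dsimp only
    split <;> positivity
  calc (∏ k ∈ range n, ‖1 - cexp (-((t:ℂ) * (α + k)))‖) * Real.exp (-(τ*(t*(n:ℝ))))
      ≤ (((∏ k ∈ range n, Q k) * (∏ k ∈ range n, E k)) *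
          ∏ k ∈ range n, ‖1 - cexp (-((t:ℂ) * (β + k)))‖) * Real.exp (-(τ*(t*(n:ℝ)))) := by
        apply mul_le_mul_of_nonneg_right hprod (Real.exp_pos _).le
    _ = (((∏ k ∈ range n, Q k) * ((∏ k ∈ range n, E k) * Real.exp (-(τ*(t*(n:ℝ)))))) *
          ∏ k ∈ range n, ‖1 - cexp (-((t:ℂ) * (β + k)))‖) := by ring
    _ ≤ ((C₈ * Real.exp ((α-β).re*Real.log ((n:ℝ)+1) + A*Real.log ((K₀:ℝ)+1) + 40*A^3)) *
          ((4^K₀ * Real.exp (c₄*(1+Real.log (1+t*n)))) * Real.exp (-(τ*(t*(n:ℝ)))))) *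
          ∏ k ∈ range n, ‖1 - cexp (-((t:ℂ) * (β + k)))‖ := by
        apply mul_le_mul_of_nonneg_right _ hdenprodpos.le
        apply mul_le_mul hQbound _ (by positivity) (by positivity)
        apply mul_le_mul_of_nonneg_right hEbound (Real.exp_pos _).le
    _ ≤ (C₈ * 4^K₀ *
          Real.exp (A*Real.log ((K₀:ℝ)+1) + 40*A^3 + c₄ + (τ + c₄^2/τ)) *
          ((1 + (n:ℝ)) ^ (-(β - α).re))) *
          ∏ k ∈ range n, ‖1 - cexp (-((t:ℂ) * (β + k)))‖ := by
        apply mul_le_mul_of_nonneg_right _ hdenprodpos.le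
        have hexps : (α-β).re*Real.log ((n:ℝ)+1) + A*Real.log ((K₀:ℝ)+1) + 40*A^3 +
            (c₄*(1+Real.log (1+t*(n:ℝ))) + -(τ*(t*(n:ℝ)))) ≤
            (A*Real.log ((K₀:ℝ)+1) + 40*A^3 + c₄ + (τ + c₄^2/τ)) +
              (α-β).re*Real.log ((n:ℝ)+1) := by
          nlinarith [hLP]
        have hsplit : ∀ X Y Z : ℝ, (C₈ * Real.exp X) * ((4^K₀ * Real.exp Y) * Real.exp Z) =
            C₈ * (4:ℝ)^K₀ * Real.exp (X + (Y + Z)) := by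
          intro X Y Z
          rw [Real.exp_add, Real.exp_add]
          ring
        have hfin : ∀ S1 S2 V : ℝ, S1 ≤ S2 + V →
            C₈*(4:ℝ)^K₀*Real.exp S1 ≤ C₈*(4:ℝ)^K₀*Real.exp S2 * Real.exp V := by
          intro S1 S2 V h
          have hC₈0 : (0:ℝ) < C₈ := lt_of_lt_of_le one_pos hC₈1
          calc C₈*(4:ℝ)^K₀*Real.exp S1 ≤ C₈*(4:ℝ)^K₀*Real.exp (S2+V) :=
                mul_le_mul_of_nonneg_left (Real.exp_le_exp.mpr h) (by positivity)
            _ = C₈*(4:ℝ)^K₀*Real.exp S2 * Real.exp V := by rw [Real.exp_add]; ring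
        rw [hrpow, hsplit]
        exact hfin _ _ _ hexps
    _ = _ := by ring
end

section
/- Let q ∈ ℂ, 0 < |q| < 1, c ≠ 0, and g(x) = (cq^{-x};q)_∞ q^{x(x+1)/2} c^{-x} (principal powers). Then for every s ∈ ℂ and n ∈ ℕ, g(s+n) = (-1)^n g(s) (c^{-1}q^{1+s}; q)_n, and consequently lim_{n→∞} (-1)^n g(s+n) = g(s)(c^{-1}q^{1+s};q)_∞. -/
open Complex Finset Filter

set_option maxHeartbeats 1000000

/-- `g(x) = (c q^{-x};q)_∞ · q^{x(x+1)/2} · c^{-x}` with principal powers. -/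
noncomputable def gfun (q c : ℂ) (x : ℂ) : ℂ :=
  (∏' k : ℕ, (1 - c * q ^ (-x) * q ^ k)) * q ^ (x * (x + 1) / 2) * c ^ (-x)

lemma multipliable_zero_aux (f : ℕ → ℂ) (j : ℕ) (hj : f j = 0) : Multipliable f := by
  refine ⟨0, ?_⟩
  refine tendsto_const_nhds.congr' ?_
  rw [Filter.EventuallyEq, SummationFilter.unconditional_filter, eventually_atTop]
  refine ⟨{j}, fun t ht => ?_⟩
  exact (Finset.prod_eq_zero
    (Finset.mem_of_subset (Finset.le_iff_subset.mp ht) (mem_singleton_self j)) hj).symm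

lemma multipliable_aux (q a : ℂ) (hq1 : ‖q‖ < 1) :
    Multipliable (fun k : ℕ => 1 - a * q ^ k) := by
  by_cases h : ∀ k : ℕ, 1 - a * q ^ k ≠ 0
  · have hsum : Summable (fun k : ℕ => Complex.log (1 - a * q ^ k)) := by
      have hg : Summable (fun k : ℕ => (3/2 : ℝ) * (‖a‖ * ‖q‖ ^ k)) :=
        ((summable_geometric_of_lt_one (norm_nonneg q) hq1).mul_left ‖a‖).mul_left _
      apply Summable.of_norm_bounded_eventually_nat hg
      have h0 : Tendsto (fun k : ℕ => ‖a‖ * ‖q‖ ^ k) atTop (nhds 0) := by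
        simpa using (tendsto_pow_atTop_nhds_zero_of_lt_one (norm_nonneg q) hq1).const_mul ‖a‖
      filter_upwards [h0.eventually_le_const (by norm_num : (0:ℝ) < 1/2)] with k hk
      have h1 : ‖-(a * q ^ k)‖ ≤ 1/2 := by
        simpa [norm_mul, norm_pow] using hk
      have := Complex.norm_log_one_add_half_le_self h1
      rw [show (1 : ℂ) + -(a * q ^ k) = 1 - a * q ^ k by ring] at this
      refine this.trans ?_
      simp [norm_mul, norm_pow]
    exact Complex.multipliable_of_summable_log hsum
  · push_neg at h
    obtain ⟨j, hj⟩ := h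
    exact multipliable_zero_aux _ j hj

lemma gfun_step (q c : ℂ) (hq0 : q ≠ 0) (hq1 : ‖q‖ < 1) (hc : c ≠ 0) (x : ℂ) :
    gfun q c (x + 1) = -(1 - c⁻¹ * q ^ (1 + x)) * gfun q c x := by
  have hshift : ∀ k : ℕ, (1 - c * q ^ (-(x+1)) * q ^ (k+1)) = 1 - c * q ^ (-x) * q ^ k := by
    intro k
    have : q ^ (-(x+1)) * q ^ (k+1) = q ^ (-x) * q ^ k := by
      rw [show -(x+1) = -x + (-1) by ring, Complex.cpow_add _ _ hq0, Complex.cpow_neg_one,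
        pow_succ]
      field_simp
    rw [mul_assoc, this, ← mul_assoc]
  have hP2 : (∏' k : ℕ, (1 - c * q ^ (-(x+1)) * q ^ (k+1)))
      = ∏' k : ℕ, (1 - c * q ^ (-x) * q ^ k) := tprod_congr hshift
  have hM1 : Multipliable (fun n : ℕ => 1 - c * q ^ (-(x+1)) * q ^ (n+1)) :=
    (multipliable_aux q (c * q ^ (-x)) hq1).congr (fun n => (hshift n).symm)
  have hP : (∏' k : ℕ, (1 - c * q ^ (-(x+1)) * q ^ k))
      = (1 - c * q ^ (-(x+1))) * ∏' k : ℕ, (1 - c * q ^ (-x) * q ^ k) := by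
    rw [tprod_eq_zero_mul' hM1, hP2]
    simp
  have hQ : q ^ ((x+1) * ((x+1) + 1) / 2) = q ^ (x * (x + 1) / 2) * q ^ (x + 1) := by
    rw [show (x+1) * ((x+1) + 1) / 2 = x * (x + 1) / 2 + (x + 1) by ring,
      Complex.cpow_add _ _ hq0]
  have hC : c ^ (-(x+1)) = c ^ (-x) * c⁻¹ := by
    rw [show -(x+1) = -x + (-1) by ring, Complex.cpow_add _ _ hc, Complex.cpow_neg_one]
  have hkey : (1 - c * q ^ (-(x+1))) * (q ^ (x+1) * c⁻¹) = -(1 - c⁻¹ * q ^ (1 + x)) := by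
    have h1 : q ^ (-(x+1)) * q ^ (x+1) = 1 := by
      rw [Complex.cpow_neg, inv_mul_cancel₀ (by simp [Complex.cpow_eq_zero_iff, hq0])]
    have h2 : q ^ (x + 1) = q ^ (1 + x) := by rw [add_comm]
    calc (1 - c * q ^ (-(x+1))) * (q ^ (x+1) * c⁻¹)
        = q ^ (x+1) * c⁻¹ - c * c⁻¹ * (q ^ (-(x+1)) * q ^ (x+1)) := by ring
      _ = -(1 - c⁻¹ * q ^ (1 + x)) := by
          rw [h1, mul_inv_cancel₀ hc, h2]; ring
  unfold gfun
  rw [hP, hQ, hC]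
  calc (1 - c * q ^ (-(x+1))) * (∏' k : ℕ, (1 - c * q ^ (-x) * q ^ k))
        * (q ^ (x * (x + 1) / 2) * q ^ (x + 1)) * (c ^ (-x) * c⁻¹)
      = ((1 - c * q ^ (-(x+1))) * (q ^ (x+1) * c⁻¹))
        * ((∏' k : ℕ, (1 - c * q ^ (-x) * q ^ k)) * q ^ (x * (x + 1) / 2) * c ^ (-x)) := by
        ring
    _ = _ := by rw [hkey]

/-- `g(s+n) = (-1)^n g(s) (c⁻¹q^{1+s};q)_n` and hence
`(-1)^n g(s+n) → g(s)(c⁻¹q^{1+s};q)_∞` as `n → ∞`. -/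
theorem gfun_shift (q c : ℂ) (hq : 0 < ‖q‖) (hq1 : ‖q‖ < 1)
    (hc : c ≠ 0) (s : ℂ) :
    (∀ n : ℕ, gfun q c (s + n)
        = (-1) ^ n * gfun q c s * ∏ k ∈ range n, (1 - c⁻¹ * q ^ (1 + s) * q ^ k)) ∧
    Tendsto (fun n : ℕ => (-1) ^ n * gfun q c (s + n)) atTop
      (nhds (gfun q c s * ∏' k : ℕ, (1 - c⁻¹ * q ^ (1 + s) * q ^ k))) := by
  have hq0 : q ≠ 0 := by
    intro h; simp [h] at hq
  have hq1' : ‖q‖ < 1 := hq1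
  have hmain : ∀ n : ℕ, gfun q c (s + n)
      = (-1) ^ n * gfun q c s * ∏ k ∈ range n, (1 - c⁻¹ * q ^ (1 + s) * q ^ k) := by
    intro n
    induction n with
    | zero => simp
    | succ n ih =>
      have h1 : (s + (n + 1 : ℕ) : ℂ) = (s + n) + 1 := by push_cast; ring
      have h2 : q ^ (1 + (s + (n:ℂ))) = q ^ (1 + s) * q ^ n := by
        rw [show 1 + (s + (n:ℂ)) = (1 + s) + n by ring, Complex.cpow_add _ _ hq0,
          Complex.cpow_natCast]
      rw [h1, gfun_step q c hq0 hq1' hc, ih, prod_range_succ, h2]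
      ring
  refine ⟨hmain, ?_⟩
  have hT : Tendsto (fun n : ℕ => gfun q c s * ∏ k ∈ range n, (1 - c⁻¹ * q ^ (1 + s) * q ^ k))
      atTop (nhds (gfun q c s * ∏' k : ℕ, (1 - c⁻¹ * q ^ (1 + s) * q ^ k))) :=
    ((multipliable_aux q _ hq1').hasProd.tendsto_prod_nat).const_mul _
  refine hT.congr fun n => ?_
  rw [hmain n]
  symm
  have : ((-1 : ℂ)) ^ n * (-1) ^ n = 1 := by
    rw [← pow_add]; exact Even.neg_one_pow ⟨n, rfl⟩
  calc (-1:ℂ) ^ n * ((-1) ^ n * gfun q c s * ∏ k ∈ range n, (1 - c⁻¹ * q ^ (1 + s) * q ^ k))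
      = ((-1:ℂ)^n * (-1)^n) * (gfun q c s * ∏ k ∈ range n, (1 - c⁻¹ * q ^ (1 + s) * q ^ k)) := by
        ring
    _ = _ := by rw [this, one_mul]
end

section
/- For a ∈ ℂ \ [1,∞), as q → 1⁻ (writing q = e^{-u}), (a;q)_∞ ~ (1-a)^{1/2} exp(-u^{-1} Li₂(a)); that is, (a;q)_∞ · exp(u^{-1}Li₂(a)) · (1-a)^{-1/2} → 1 as u → 0⁺. -/
open Complex Filter

/-- The dilogarithm `Li₂(a) = -∫₀¹ log(1-at)/t dt`, giving the analytic continuation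
of `Σ_{k≥1} aᵏ/k²` to `ℂ \ [1,∞)`. -/
noncomputable def Li2 (a : ℂ) : ℂ := -∫ t in (0:ℝ)..1, Complex.log (1 - a * t) / t

open Complex Filter MeasureTheory Set intervalIntegral Topology


lemma hasDerivAt_coe (t : ℝ) : HasDerivAt (fun x : ℝ => (x : ℂ)) 1 t :=
  (hasDerivAt_id (t:ℂ)).comp_ofReal

lemma integral_linear_zero (k : ℝ) :
    (∫ t in k..(k+1), ((t:ℂ) - ((k:ℂ) + 1/2))) = 0 := by
  have : ∀ t : ℝ, ((t:ℂ) - ((k:ℂ) + 1/2)) = ((t - (k + 1/2) : ℝ) : ℂ) := by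
    intro t; push_cast; ring
  simp_rw [this]
  rw [intervalIntegral.integral_ofReal]
  norm_cast
  rw [intervalIntegral.integral_sub intervalIntegral.intervalIntegrable_id
    (intervalIntegrable_const), integral_id, intervalIntegral.integral_const]
  simp
  ring

lemma trapezoid_est (f f' f'' : ℝ → ℂ) (k : ℝ) (M : ℝ)
    (hf : ∀ t ∈ Icc k (k+1), HasDerivAt f (f' t) t)
    (hf' : ∀ t ∈ Icc k (k+1), HasDerivAt f' (f'' t) t)
    (hM : ∀ t ∈ Icc k (k+1), ‖f'' t‖ ≤ M) :
    ‖(f k + f (k+1))/2 - ∫ t in k..(k+1), f t‖ ≤ M/4 := by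
  have hk1 : k ≤ k + 1 := by linarith
  have huIcc : uIcc k (k+1) = Icc k (k+1) := uIcc_of_le hk1
  have hMnn : 0 ≤ M := le_trans (norm_nonneg _) (hM k ⟨le_refl _, hk1⟩)
  set c : ℝ := k + 1/2 with hc
  have hcI : c ∈ Icc k (k+1) := by constructor <;> [simp [hc]; simp [hc]] <;> linarith
  -- continuity of f'
  have hf'cont : ContinuousOn f' (Icc k (k+1)) :=
    fun t ht => (hf' t ht).continuousAt.continuousWithinAt
  have hfcont : ContinuousOn f (Icc k (k+1)) :=
    fun t ht => (hf t ht).continuousAt.continuousWithinAt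
  -- integration by parts
  have hU : ∀ t ∈ uIcc k (k+1), HasDerivAt (fun t : ℝ => (t:ℂ) - ((k:ℂ)+1/2)) 1 t := by
    intro t _
    simpa using (hasDerivAt_coe t).sub_const ((k:ℂ)+1/2)
  have parts := intervalIntegral.integral_mul_deriv_eq_deriv_mul
    (u := fun t : ℝ => (t:ℂ) - ((k:ℂ)+1/2)) (v := f) (u' := fun _ => 1) (v' := f')
    hU (fun t ht => hf t (huIcc ▸ ht))
    (intervalIntegrable_const)
    ((hf'cont.mono (by rw [huIcc])).intervalIntegrable)
  -- parts : ∫ (t - c) * f' t = (k+1-c) f(k+1) - (k-c) f k - ∫ 1 * f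
  have huK : ((k+1 : ℝ):ℂ) - ((k:ℂ)+1/2) = 1/2 := by push_cast; ring
  have hlK : ((k : ℝ):ℂ) - ((k:ℂ)+1/2) = -(1/2) := by push_cast; ring
  rw [show ((k+1:ℝ):ℂ) - ((k:ℂ)+1/2) = 1/2 by push_cast; ring,
    show ((k:ℝ):ℂ) - ((k:ℂ)+1/2) = -(1/2) by push_cast; ring] at parts
  have key : (f k + f (k+1))/2 - ∫ t in k..(k+1), f t
      = ∫ t in k..(k+1), ((t:ℂ) - ((k:ℂ)+1/2)) * (f' t - f' c) := by
    have h1 : (∫ t in k..(k+1), ((t:ℂ) - ((k:ℂ)+1/2)) * (f' t - f' c))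
        = (∫ t in k..(k+1), ((t:ℂ) - ((k:ℂ)+1/2)) * f' t)
          - (∫ t in k..(k+1), ((t:ℂ) - ((k:ℂ)+1/2)) * f' c) := by
      rw [← intervalIntegral.integral_sub]
      · congr 1; ext t; ring
      · apply ContinuousOn.intervalIntegrable
        rw [huIcc]
        exact ((Complex.continuous_ofReal.comp_continuousOn continuousOn_id).sub continuousOn_const).mul hf'cont
      · apply ContinuousOn.intervalIntegrable
        rw [huIcc]
        exact ((Complex.continuous_ofReal.comp_continuousOn continuousOn_id).sub continuousOn_const).mul continuousOn_const
    have h2 : (∫ t in k..(k+1), ((t:ℂ) - ((k:ℂ)+1/2)) * f' c)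
        = (∫ t in k..(k+1), ((t:ℂ) - ((k:ℂ)+1/2))) * f' c :=
      intervalIntegral.integral_mul_const _ _
    rw [h1, h2, integral_linear_zero, zero_mul, sub_zero, parts]
    simp only [one_mul]
    ring
  rw [key]
  have bound : ∀ t ∈ Icc k (k+1), ‖((t:ℂ) - ((k:ℂ)+1/2)) * (f' t - f' c)‖ ≤ M/4 := by
    intro t ht
    rw [norm_mul]
    have h1 : ‖(t:ℂ) - ((k:ℂ)+1/2)‖ ≤ 1/2 := by
      have : ((t:ℂ) - ((k:ℂ)+1/2)) = ((t - c : ℝ) : ℂ) := by rw [hc]; push_cast; ring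
      rw [this, Complex.norm_real, Real.norm_eq_abs, abs_le]
      obtain ⟨h1, h2⟩ := ht; constructor <;> [skip; skip] <;> simp [hc] <;> linarith
    have h2 : ‖f' t - f' c‖ ≤ M * ‖t - c‖ := by
      exact (convex_Icc k (k+1)).norm_image_sub_le_of_norm_hasDerivWithin_le
        (fun x hx => (hf' x hx).hasDerivWithinAt) hM hcI ht
    have h3 : ‖t - c‖ ≤ 1/2 := by
      rw [Real.norm_eq_abs, abs_le]
      obtain ⟨h1, h2⟩ := ht; constructor <;> simp [hc] <;> linarith
    calc ‖(t:ℂ) - ((k:ℂ)+1/2)‖ * ‖f' t - f' c‖ ≤ (1/2) * (M * (1/2)) := by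
          apply mul_le_mul h1 (h2.trans (by nlinarith)) (norm_nonneg _) (by norm_num)
      _ = M/4 := by ring
  calc ‖∫ t in k..(k+1), ((t:ℂ) - ((k:ℂ)+1/2)) * (f' t - f' c)‖
      ≤ (M/4) * |k+1-k| := intervalIntegral.norm_integral_le_of_norm_le_const
        (fun t ht => bound t (Ioc_subset_Icc_self ((Set.uIoc_of_le hk1) ▸ ht)))
    _ = M/4 := by rw [show k+1-k = 1 by ring]; simp

variable {a : ℂ}


lemma seg_slit (ha : ¬(a.im = 0 ∧ 1 ≤ a.re)) {r : ℝ} (hr : r ∈ Icc (0:ℝ) 1) :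
    1 - a * r ∈ Complex.slitPlane := by
  rw [Complex.mem_slitPlane_iff]
  obtain ⟨hr0, hr1⟩ := hr
  rcases eq_or_lt_of_le hr0 with h | h
  · left; simp [← h]
  by_cases him : a.im = 0
  · left
    have hre : a.re < 1 := by
      by_contra hc; exact ha ⟨him, not_lt.mp hc⟩
    simp only [Complex.sub_re, Complex.one_re, Complex.mul_re, Complex.ofReal_re,
      Complex.ofReal_im, mul_zero, him, zero_mul, sub_zero]
    nlinarith
  · right
    simp only [Complex.sub_im, Complex.one_im, Complex.mul_im, Complex.ofReal_re,
      Complex.ofReal_im, mul_zero, zero_sub, neg_ne_zero, add_zero]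
    simpa using mul_ne_zero him (ne_of_gt h)

lemma seg_ne (ha : ¬(a.im = 0 ∧ 1 ≤ a.re)) {r : ℝ} (hr : r ∈ Icc (0:ℝ) 1) :
    1 - a * r ≠ 0 := Complex.slitPlane_ne_zero (seg_slit ha hr)

lemma exists_seg_bound (ha : ¬(a.im = 0 ∧ 1 ≤ a.re)) :
    ∃ c : ℝ, 0 < c ∧ ∀ r ∈ Icc (0:ℝ) 1, c ≤ ‖1 - a * r‖ := by
  have hcont : ContinuousOn (fun r : ℝ => ‖1 - a * r‖) (Icc 0 1) := by
    exact continuous_norm.comp_continuousOn (by fun_prop)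
  obtain ⟨r₀, hr₀, hmin⟩ := isCompact_Icc.exists_isMinOn (by norm_num : (Icc (0:ℝ) 1).Nonempty) hcont
  exact ⟨_, norm_pos_iff.mpr (seg_ne ha hr₀), fun r hr => hmin hr⟩


noncomputable def Wf (a : ℂ) (u : ℝ) (t : ℝ) : ℂ := a * Complex.exp (-(u * t))

lemma Wf_real (a : ℂ) (u t : ℝ) : Wf a u t = a * (Real.exp (-(u * t)) : ℝ) := by
  rw [Wf, Complex.ofReal_exp]
  push_cast
  ring_nf

lemma Wf_mem (a : ℂ) (u : ℝ) {t : ℝ} (ht : 0 ≤ t) (hu : 0 ≤ u) :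
    Real.exp (-(u * t)) ∈ Icc (0:ℝ) 1 :=
  ⟨(Real.exp_pos _).le, Real.exp_le_one_iff.mpr (neg_nonpos.mpr (mul_nonneg hu ht))⟩

lemma hasDerivAt_Wf (a : ℂ) (u : ℝ) (t : ℝ) :
    HasDerivAt (fun s : ℝ => Wf a u s) (-(u:ℂ) * Wf a u t) t := by
  have h1 : HasDerivAt (fun z : ℂ => a * Complex.exp (-((u:ℂ) * z)))
      (a * (Complex.exp (-((u:ℂ) * (t:ℂ))) * -(u:ℂ))) (t:ℂ) := by
    have hin : HasDerivAt (fun z : ℂ => -((u:ℂ) * z)) (-(u:ℂ)) (t:ℂ) := by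
      simpa using ((hasDerivAt_id ((t:ℝ):ℂ)).const_mul (u:ℂ)).fun_neg
    exact ((Complex.hasDerivAt_exp _).comp _ hin).const_mul a
  have := h1.comp_ofReal
  simpa [Wf] using this.congr_deriv (by ring)

section

variable {a : ℂ} {c u : ℝ}

/-- the log function along the flow -/
noncomputable def qlog (a : ℂ) (u : ℝ) (t : ℝ) : ℂ := Complex.log (1 - Wf a u t)

/-- first derivative -/
noncomputable def qd1 (a : ℂ) (u : ℝ) (t : ℝ) : ℂ := (1 - Wf a u t)⁻¹ * ((u:ℂ) * Wf a u t)

/-- second derivative -/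
noncomputable def qd2 (a : ℂ) (u : ℝ) (t : ℝ) : ℂ :=
  -((u:ℂ) * Wf a u t) / (1 - Wf a u t) ^ 2 * ((u:ℂ) * Wf a u t)
    + (1 - Wf a u t)⁻¹ * ((u:ℂ) * (-(u:ℂ) * Wf a u t))

variable (ha : ¬(a.im = 0 ∧ 1 ≤ a.re)) (hc0 : 0 < c)
  (hc : ∀ r ∈ Icc (0:ℝ) 1, c ≤ ‖1 - a * r‖)

include ha

lemma slit_Wf (hu : 0 ≤ u) {t : ℝ} (ht : 0 ≤ t) : 1 - Wf a u t ∈ Complex.slitPlane := by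
  rw [Wf_real]
  exact seg_slit ha (Wf_mem a u ht hu)

lemma ne_Wf (hu : 0 ≤ u) {t : ℝ} (ht : 0 ≤ t) : 1 - Wf a u t ≠ 0 :=
  Complex.slitPlane_ne_zero (slit_Wf ha hu ht)

lemma hasDerivAt_qlog (hu : 0 ≤ u) {t : ℝ} (ht : 0 ≤ t) :
    HasDerivAt (qlog a u) (qd1 a u t) t := by
  have h1 : HasDerivAt (fun s : ℝ => 1 - Wf a u s) (-(-(u:ℂ) * Wf a u t)) t :=
    (hasDerivAt_Wf a u t).const_sub 1
  have h2 := (Complex.hasDerivAt_log (slit_Wf ha hu ht)).comp t h1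
  unfold qlog qd1
  exact h2.congr_deriv (by ring)

lemma hasDerivAt_qd1 (hu : 0 ≤ u) {t : ℝ} (ht : 0 ≤ t) :
    HasDerivAt (qd1 a u) (qd2 a u t) t := by
  have h1 : HasDerivAt (fun s : ℝ => 1 - Wf a u s) (-(-(u:ℂ) * Wf a u t)) t :=
    (hasDerivAt_Wf a u t).const_sub 1
  have h2 : HasDerivAt (fun s : ℝ => (1 - Wf a u s)⁻¹)
      (-(((1 - Wf a u t) ^ 2)⁻¹) * (-(-(u:ℂ) * Wf a u t))) t :=
    (hasDerivAt_inv (ne_Wf ha hu ht)).comp t h1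
  have h3 : HasDerivAt (fun s : ℝ => (u:ℂ) * Wf a u s) ((u:ℂ) * (-(u:ℂ) * Wf a u t)) t :=
    (hasDerivAt_Wf a u t).const_mul _
  have h4 := h2.mul h3
  unfold qd1 qd2
  exact h4.congr_deriv (by ring)

include hc0 hc

lemma abs_one_sub_Wf (hu : 0 ≤ u) {t : ℝ} (ht : 0 ≤ t) : c ≤ ‖1 - Wf a u t‖ := by
  rw [Wf_real]
  exact hc _ (Wf_mem a u ht hu)

lemma norm_qd2_le (hu : 0 ≤ u) {t : ℝ} (ht : 0 ≤ t) :
    ‖qd2 a u t‖ ≤ u^2 * Real.exp (-(u*t)) * (‖a‖ / c + (‖a‖)^2 / c^2) := by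
  have habs : ‖Wf a u t‖ = ‖a‖ * Real.exp (-(u*t)) := by
    rw [Wf_real, norm_mul, Complex.norm_real, Real.norm_eq_abs, abs_of_pos (Real.exp_pos _)]
  have hcle := abs_one_sub_Wf ha hc0 hc hu ht
  have hcle' : ‖1 - Wf a u t‖ ≠ 0 := ne_of_gt (lt_of_lt_of_le hc0 hcle)
  have he1 : Real.exp (-(u*t)) ≤ 1 := (Wf_mem a u ht hu).2
  have h1 : ‖-((u:ℂ) * Wf a u t) / (1 - Wf a u t) ^ 2 * ((u:ℂ) * Wf a u t)‖
      ≤ u^2 * Real.exp (-(u*t)) * (‖a‖)^2 / c^2 := by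
    simp only [norm_mul, norm_div, norm_neg, norm_pow, Complex.norm_real,
      Real.norm_eq_abs, habs, _root_.abs_of_nonneg hu]
    rw [div_mul_eq_mul_div, div_le_div_iff₀ (by positivity) (by positivity)]
    have key : Real.exp (-(u*t)) * c^2 ≤ (‖1 - Wf a u t‖)^2 := by nlinarith
    nlinarith [mul_le_mul_of_nonneg_left key
      (by positivity : (0:ℝ) ≤ u^2 * (‖a‖)^2 * Real.exp (-(u*t)))]
  have h2 : ‖(1 - Wf a u t)⁻¹ * ((u:ℂ) * (-(u:ℂ) * Wf a u t))‖
      ≤ u^2 * Real.exp (-(u*t)) * ‖a‖ / c := by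
    simp only [norm_mul, norm_inv, Complex.norm_real, norm_neg,
      Real.norm_eq_abs, habs, _root_.abs_of_nonneg hu]
    rw [inv_mul_eq_div, div_le_div_iff₀ (by positivity) (by positivity)]
    nlinarith [mul_le_mul_of_nonneg_left hcle
      (by positivity : (0:ℝ) ≤ u^2 * ‖a‖ * Real.exp (-(u*t)))]
  calc ‖qd2 a u t‖ ≤ _ + _ := norm_add_le _ _
    _ ≤ u^2 * Real.exp (-(u*t)) * (‖a‖)^2/c^2 + u^2 * Real.exp (-(u*t)) * ‖a‖ / c := add_le_add h1 h2
    _ = u^2 * Real.exp (-(u*t)) * (‖a‖ / c + (‖a‖)^2 / c^2) := by ring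


lemma norm_log_seg_le {r : ℝ} (hr : r ∈ Icc (0:ℝ) 1) :
    ‖Complex.log (1 - a * r)‖ ≤ (‖a‖ / c) * r := by
  have hder : ∀ x ∈ Icc (0:ℝ) 1, HasDerivWithinAt (fun s : ℝ => Complex.log (1 - a * s))
      ((1 - a * x)⁻¹ * (-a)) (Icc (0:ℝ) 1) x := by
    intro x hx
    have h1 : HasDerivAt (fun s : ℝ => 1 - a * (s:ℂ)) (-a) x := by
      simpa using (((hasDerivAt_id ((x:ℝ):ℂ)).const_mul a).comp_ofReal).const_sub 1
    exact ((Complex.hasDerivAt_log (seg_slit ha hx)).comp x h1).hasDerivWithinAt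
  have hbound : ∀ x ∈ Icc (0:ℝ) 1, ‖(1 - a * (x:ℂ))⁻¹ * (-a)‖ ≤ ‖a‖ / c := by
    intro x hx
    rw [norm_mul, norm_inv, norm_neg]
    rw [inv_mul_eq_div, div_le_div_iff₀ (lt_of_lt_of_le hc0 (hc x hx)) hc0]
    have := hc x hx
    nlinarith [norm_nonneg a]
  have h0 : (0:ℝ) ∈ Icc (0:ℝ) 1 := by norm_num
  have h := (convex_Icc (0:ℝ) 1).norm_image_sub_le_of_norm_hasDerivWithin_le hder hbound h0 hr
  simp only [Complex.ofReal_zero, mul_zero, sub_zero, Complex.log_one, Real.norm_eq_abs,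
    _root_.abs_of_nonneg hr.1] at h
  simpa using h



lemma norm_qlog_le (hu : 0 ≤ u) {t : ℝ} (ht : 0 ≤ t) :
    ‖qlog a u t‖ ≤ (‖a‖ / c) * Real.exp (-(u*t)) := by
  rw [qlog, Wf_real]
  exact norm_log_seg_le ha hc0 hc (Wf_mem a u ht hu)

lemma summable_qlog (hu : 0 < u) : Summable (fun k : ℕ => qlog a u k) := by
  apply Summable.of_norm_bounded (g := fun k : ℕ => (‖a‖ / c) * (Real.exp (-u))^k)
  · exact (summable_geometric_of_lt_one (Real.exp_pos _).le
      (Real.exp_lt_one_iff.mpr (by linarith))).mul_left _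
  · intro k
    have := norm_qlog_le ha hc0 hc hu.le (Nat.cast_nonneg k : (0:ℝ) ≤ k)
    calc ‖qlog a u k‖ ≤ ‖a‖ / c * Real.exp (-(u * k)) := this
      _ = ‖a‖ / c * Real.exp (-u) ^ k := by
          rw [← Real.exp_nat_mul]; ring_nf

lemma continuousOn_qlog (hu : 0 ≤ u) : ContinuousOn (qlog a u) (Ici (0:ℝ)) := by
  intro t ht
  apply ContinuousAt.continuousWithinAt
  exact (hasDerivAt_qlog ha hu ht).continuousAt

lemma integrableOn_qlog (hu : 0 < u) : IntegrableOn (qlog a u) (Ioi (0:ℝ)) := by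
  apply Integrable.mono' (g := fun t : ℝ => (‖a‖ / c) * Real.exp (-u * t))
  · exact (exp_neg_integrableOn_Ioi 0 hu).const_mul _
  · exact ((continuousOn_qlog ha hc0 hc hu.le).mono Ioi_subset_Ici_self).aestronglyMeasurable
      measurableSet_Ioi
  · filter_upwards [ae_restrict_mem measurableSet_Ioi] with t ht
    have := norm_qlog_le ha hc0 hc hu.le (le_of_lt ht)
    rw [show -u * t = -(u * t) by ring]; exact this


omit ha hc0 hc in
lemma sum_Mk_le (Ca : ℝ) (hCa : 0 ≤ Ca) (hu : 0 < u) (hu1 : u ≤ 1) (N : ℕ) :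
    ∑ k ∈ Finset.range N, u^2 * Real.exp (-(u*k)) * Ca / 4 ≤ Ca * u := by
  have hr0 : (0:ℝ) ≤ Real.exp (-u) := (Real.exp_pos _).le
  have hr1 : Real.exp (-u) < 1 := Real.exp_lt_one_iff.mpr (by linarith)
  have hgeom : ∑ k ∈ Finset.range N, (Real.exp (-u))^k ≤ (1 - Real.exp (-u))⁻¹ := by
    rw [← tsum_geometric_of_lt_one hr0 hr1]
    exact Summable.sum_le_tsum _ (fun k _ => pow_nonneg hr0 k)
      (summable_geometric_of_lt_one hr0 hr1)
  have hexp : ∀ k : ℕ, Real.exp (-(u*k)) = (Real.exp (-u))^k := by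
    intro k; rw [← Real.exp_nat_mul]; ring_nf
  have heq : ∑ k ∈ Finset.range N, u^2 * Real.exp (-(u*k)) * Ca / 4
      = (u^2 * Ca / 4) * ∑ k ∈ Finset.range N, (Real.exp (-u))^k := by
    rw [Finset.mul_sum]
    exact Finset.sum_congr rfl (fun k _ => by rw [hexp k]; ring)
  rw [heq]
  have hlow : u / 2 ≤ 1 - Real.exp (-u) := by
    have h1 : Real.exp (-u) ≤ (1 + u)⁻¹ := by
      rw [Real.exp_neg]
      exact inv_anti₀ (by linarith) (by linarith [Real.add_one_le_exp u])
    have h2 : 1 - (1+u)⁻¹ = u/(1+u) := by field_simp; ring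
    have h3 : u/2 ≤ u/(1+u) :=
      div_le_div_of_nonneg_left hu.le (by linarith) (by linarith)
    linarith
  have hinv : (1 - Real.exp (-u))⁻¹ ≤ 2 / u := by
    rw [inv_le_iff_one_le_mul₀ (by linarith)]
    rw [div_mul_eq_mul_div, le_div_iff₀ hu]
    nlinarith
  calc (u^2 * Ca / 4) * ∑ k ∈ Finset.range N, (Real.exp (-u))^k
      ≤ (u^2 * Ca / 4) * (2/u) := by
        apply mul_le_mul_of_nonneg_left (hgeom.trans hinv) (by positivity)
    _ = Ca * u / 2 := by field_simp; ring
    _ ≤ Ca * u := by nlinarith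

include ha hc0 hc in
lemma key_est (hu : 0 < u) (hu1 : u ≤ 1) :
    ‖(∑' k : ℕ, qlog a u k) - (∫ t in Ioi (0:ℝ), qlog a u t) - qlog a u 0 / 2‖
      ≤ (‖a‖ / c + (‖a‖)^2/c^2) * u := by
  set Ca : ℝ := ‖a‖ / c + (‖a‖)^2/c^2 with hCadef
  have hCa : 0 ≤ Ca := by positivity
  set f : ℝ → ℂ := qlog a u with hfdef
  have hii : ∀ x y : ℝ, 0 ≤ x → 0 ≤ y → IntervalIntegrable f volume x y := by
    intro x y hx hy
    apply ContinuousOn.intervalIntegrable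
    apply (continuousOn_qlog ha hc0 hc hu.le).mono
    intro t ht
    exact le_trans (le_min hx hy) ht.1
  have htrap : ∀ k : ℕ, ‖(f k + f ((k:ℝ)+1))/2 - ∫ t in (k:ℝ)..((k:ℝ)+1), f t‖
      ≤ u^2 * Real.exp (-(u*k)) * Ca / 4 := by
    intro k
    have hk0 : (0:ℝ) ≤ (k:ℝ) := Nat.cast_nonneg k
    apply trapezoid_est f (qd1 a u) (qd2 a u) (k:ℝ) _
      (fun t ht => hasDerivAt_qlog ha hu.le (le_trans hk0 ht.1))
      (fun t ht => hasDerivAt_qd1 ha hu.le (le_trans hk0 ht.1))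
    intro t ht
    have h1 := norm_qd2_le ha hc0 hc hu.le (le_trans hk0 ht.1)
    rw [← hCadef] at h1
    apply h1.trans
    have hee : Real.exp (-(u*t)) ≤ Real.exp (-(u*k)) := by
      apply Real.exp_le_exp.mpr
      have := ht.1
      nlinarith
    gcongr
  have identity : ∀ N : ℕ,
      (∑ k ∈ Finset.range N, ((f k + f ((k:ℝ)+1))/2 - ∫ t in (k:ℝ)..((k:ℝ)+1), f t))
      = (∑ k ∈ Finset.range N, f k) + f N / 2 - f 0 / 2 - ∫ t in (0:ℝ)..(N:ℝ), f t := by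
    intro N
    induction N with
    | zero => simp
    | succ N ih =>
      rw [Finset.sum_range_succ, ih, Finset.sum_range_succ]
      have hadd : (∫ t in (0:ℝ)..(N:ℝ), f t) + ∫ t in (N:ℝ)..((N:ℝ)+1), f t
          = ∫ t in (0:ℝ)..((N:ℝ)+1), f t :=
        intervalIntegral.integral_add_adjacent_intervals
          (hii 0 N le_rfl (Nat.cast_nonneg N))
          (hii N ((N:ℝ)+1) (Nat.cast_nonneg N) (by positivity))
      push_cast
      rw [← hadd]
      ring
  have boundN : ∀ N : ℕ,
      ‖(∑ k ∈ Finset.range N, f k) + f N / 2 - f 0 / 2 - ∫ t in (0:ℝ)..(N:ℝ), f t‖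
        ≤ Ca * u := by
    intro N
    rw [← identity N]
    calc ‖∑ k ∈ Finset.range N, ((f k + f ((k:ℝ)+1))/2 - ∫ t in (k:ℝ)..((k:ℝ)+1), f t)‖
        ≤ ∑ k ∈ Finset.range N, ‖(f k + f ((k:ℝ)+1))/2 - ∫ t in (k:ℝ)..((k:ℝ)+1), f t‖ :=
          norm_sum_le _ _
      _ ≤ ∑ k ∈ Finset.range N, u^2 * Real.exp (-(u*k)) * Ca / 4 :=
          Finset.sum_le_sum (fun k _ => htrap k)
      _ ≤ Ca * u := sum_Mk_le Ca hCa hu hu1 N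
  have hr0 : (0:ℝ) ≤ Real.exp (-u) := (Real.exp_pos _).le
  have hr1 : Real.exp (-u) < 1 := Real.exp_lt_one_iff.mpr (by linarith)
  have hfN : Tendsto (fun N : ℕ => f N) atTop (𝓝 0) := by
    have hg : Tendsto (fun N : ℕ => (‖a‖ / c) * (Real.exp (-u))^N) atTop (𝓝 0) := by
      have := (tendsto_pow_atTop_nhds_zero_of_lt_one hr0 hr1).const_mul (‖a‖ / c)
      simpa using this
    refine squeeze_zero_norm (fun N => ?_) hg
    have h2 := norm_qlog_le ha hc0 hc hu.le (Nat.cast_nonneg N : (0:ℝ) ≤ N)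
    apply h2.trans
    rw [← Real.exp_nat_mul]
    apply le_of_eq; ring_nf
  have hIoi : Tendsto (fun N : ℕ => ∫ t in (0:ℝ)..(N:ℝ), f t) atTop
      (𝓝 (∫ t in Ioi (0:ℝ), f t)) :=
    intervalIntegral_tendsto_integral_Ioi 0 (integrableOn_qlog ha hc0 hc hu)
      tendsto_natCast_atTop_atTop
  have hsum : Tendsto (fun N : ℕ => ∑ k ∈ Finset.range N, f k) atTop (𝓝 (∑' k : ℕ, f k)) :=
    (summable_qlog ha hc0 hc hu).hasSum.tendsto_sum_nat
  have hlim : Tendsto (fun N : ℕ =>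
      (∑ k ∈ Finset.range N, f k) + f N / 2 - f 0 / 2 - ∫ t in (0:ℝ)..(N:ℝ), f t) atTop
      (𝓝 ((∑' k : ℕ, f k) + 0 / 2 - f 0 / 2 - ∫ t in Ioi (0:ℝ), f t)) :=
    ((hsum.add (hfN.div_const 2)).sub tendsto_const_nhds).sub hIoi
  have hfinal := le_of_tendsto hlim.norm (Eventually.of_forall boundN)
  have heq : (∑' k : ℕ, f k) - (∫ t in Ioi (0:ℝ), f t) - f 0 / 2
      = (∑' k : ℕ, f k) + 0 / 2 - f 0 / 2 - ∫ t in Ioi (0:ℝ), f t := by ring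
  rw [heq]
  exact hfinal


omit ha hc0 hc in
lemma H_cont (ha : ¬(a.im = 0 ∧ 1 ≤ a.re)) :
    ContinuousOn (fun r : ℝ => Complex.log (1 - a * r) / r) (Ioc (0:ℝ) 1) := by
  apply ContinuousOn.div
  · intro r hr
    apply ContinuousAt.continuousWithinAt
    exact ContinuousAt.clog (by fun_prop) (seg_slit ha ⟨hr.1.le, hr.2⟩)
  · fun_prop
  · intro r hr
    simpa using ne_of_gt hr.1

include ha hc0 hc in
lemma H_integrableOn : IntegrableOn (fun r : ℝ => Complex.log (1 - a * r) / r) (Icc (0:ℝ) 1) := by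
  rw [integrableOn_Icc_iff_integrableOn_Ioc]
  apply Integrable.mono' (g := fun _ : ℝ => ‖a‖ / c)
  · exact integrableOn_const measure_Ioc_lt_top.ne
  · exact (H_cont ha).aestronglyMeasurable measurableSet_Ioc
  · filter_upwards [ae_restrict_mem measurableSet_Ioc] with r hr
    rw [norm_div, Complex.norm_real, Real.norm_eq_abs, _root_.abs_of_pos hr.1]
    rw [div_le_iff₀ hr.1]
    calc ‖Complex.log (1 - a * r)‖ ≤ (‖a‖ / c) * r :=
          norm_log_seg_le ha hc0 hc ⟨hr.1.le, hr.2⟩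
      _ = ‖a‖ / c * r := rfl


include ha hc0 hc in
lemma integral_qlog_Ioi (hu : 0 < u) :
    (∫ t in Ioi (0:ℝ), qlog a u t)
      = (u⁻¹ : ℝ) • ∫ r in (0:ℝ)..1, Complex.log (1 - a * r) / r := by
  set H : ℝ → ℂ := fun r => Complex.log (1 - a * r) / r with hH
  have hsub : ∀ T : ℝ, 0 ≤ T →
      (∫ t in (0:ℝ)..T, qlog a u t) = (u⁻¹:ℝ) • ∫ r in Real.exp (-(u*T))..1, H r := by
    intro T hT
    have hφ : ∀ x ∈ uIcc (0:ℝ) T, HasDerivAt (fun t : ℝ => Real.exp (-(u*t)))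
        (-u * Real.exp (-(u*x))) x := by
      intro x _
      have h1 : HasDerivAt (fun t : ℝ => -(u*t)) (-u) x := by
        simpa using ((hasDerivAt_id x).const_mul u).fun_neg
      simpa [mul_comm] using h1.exp
    set g : ℝ → ℂ := fun r => ((-u * r)⁻¹ : ℝ) • Complex.log (1 - a * r) with hg
    have himg : (fun t : ℝ => Real.exp (-(u*t))) '' (uIcc 0 T) ⊆ Ioc (0:ℝ) 1 := by
      rintro r ⟨t, ht, rfl⟩
      have ht0 : 0 ≤ t := by rw [uIcc_of_le hT] at ht; exact ht.1
      exact ⟨Real.exp_pos _, Real.exp_le_one_iff.mpr (neg_nonpos.mpr (mul_nonneg hu.le ht0))⟩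
    have hgc : ContinuousOn g (Ioc (0:ℝ) 1) := by
      apply ContinuousOn.fun_smul
      · apply ContinuousOn.inv₀ (by fun_prop)
        intro r hr
        exact ne_of_lt (by nlinarith [hr.1])
      · intro r hr
        have hca : ContinuousAt (fun x : ℝ => 1 - a * (x:ℂ)) r := by fun_prop
        exact (hca.clog (seg_slit ha ⟨hr.1.le, hr.2⟩)).continuousWithinAt
    have heq : ∀ t : ℝ, qlog a u t = (-u * Real.exp (-(u*t))) • g (Real.exp (-(u*t))) := by
      intro t
      have hne : -u * Real.exp (-(u*t)) ≠ 0 := ne_of_lt (by nlinarith [Real.exp_pos (-(u*t))])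
      rw [hg]
      simp only []
      rw [smul_smul, mul_inv_cancel₀ hne, one_smul, qlog, Wf_real]
    have hstep : (∫ t in (0:ℝ)..T, qlog a u t)
        = ∫ r in Real.exp (-(u*0))..Real.exp (-(u*T)), g r := by
      rw [intervalIntegral.integral_congr (g := fun t => (-u * Real.exp (-(u*t))) • g (Real.exp (-(u*t)))) (fun t _ => heq t)]
      exact intervalIntegral.integral_comp_smul_deriv' hφ (by fun_prop) (hgc.mono himg)
    have hsubset : uIcc (Real.exp (-(u*T))) 1 ⊆ Ioc (0:ℝ) 1 := by
      rw [uIcc_of_le (Real.exp_le_one_iff.mpr (neg_nonpos.mpr (mul_nonneg hu.le hT)))]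
      intro r hr; exact ⟨lt_of_lt_of_le (Real.exp_pos _) hr.1, hr.2⟩
    have hEq : EqOn g (fun r => (-(u⁻¹) : ℝ) • H r) (uIcc (Real.exp (-(u*T))) 1) := by
      intro r hr
      obtain ⟨hr0, _⟩ := hsubset hr
      rw [hg, hH]
      simp only []
      rw [Complex.real_smul, Complex.real_smul, Complex.ofReal_inv, Complex.ofReal_mul,
        Complex.ofReal_neg]
      have hrne : (r:ℂ) ≠ 0 := Complex.ofReal_ne_zero.mpr (ne_of_gt hr0)
      have hune : (u:ℂ) ≠ 0 := Complex.ofReal_ne_zero.mpr (ne_of_gt hu)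
      field_simp
      push_cast
      field_simp
    rw [hstep, show (-(u*0) : ℝ) = 0 by ring, Real.exp_zero,
      intervalIntegral.integral_symm (Real.exp (-(u*T))) 1,
      intervalIntegral.integral_congr hEq, intervalIntegral.integral_smul]
    module
  have h1 : Tendsto (fun T : ℝ => ∫ t in (0:ℝ)..T, qlog a u t) atTop
      (𝓝 (∫ t in Ioi (0:ℝ), qlog a u t)) :=
    intervalIntegral_tendsto_integral_Ioi 0 (integrableOn_qlog ha hc0 hc hu) tendsto_id
  have hIH : IntegrableOn H (Icc (0:ℝ) 1) := H_integrableOn ha hc0 hc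
  have hcontH : ContinuousOn (fun x : ℝ => ∫ r in x..1, H r) (Icc (0:ℝ) 1) := by
    have h2 := continuousOn_primitive_interval_left (a := (0:ℝ)) (b := (1:ℝ)) (f := H)
      (μ := volume) (by rwa [uIcc_of_le (by norm_num : (0:ℝ) ≤ 1)])
    rwa [uIcc_of_le (by norm_num : (0:ℝ) ≤ 1)] at h2
  have hTT : Tendsto (fun T : ℝ => Real.exp (-(u*T))) atTop (𝓝[Icc (0:ℝ) 1] 0) := by
    rw [tendsto_nhdsWithin_iff]
    constructor
    · apply Real.tendsto_exp_atBot.comp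
      apply tendsto_neg_atTop_atBot.comp
      exact Tendsto.const_mul_atTop hu tendsto_id
    · filter_upwards [eventually_ge_atTop (0:ℝ)] with T hT
      exact ⟨(Real.exp_pos _).le, Real.exp_le_one_iff.mpr (neg_nonpos.mpr (mul_nonneg hu.le hT))⟩
  have hL : Tendsto (fun T : ℝ => (u⁻¹:ℝ) • ∫ r in Real.exp (-(u*T))..1, H r) atTop
      (𝓝 ((u⁻¹:ℝ) • ∫ r in (0:ℝ)..1, H r)) :=
    (((hcontH 0 (by norm_num)).tendsto).comp hTT).const_smul _
  have heq2 : ∀ᶠ T in atTop, (∫ t in (0:ℝ)..T, qlog a u t)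
      = (u⁻¹:ℝ) • ∫ r in Real.exp (-(u*T))..1, H r := by
    filter_upwards [eventually_ge_atTop (0:ℝ)] with T hT using hsub T hT
  exact tendsto_nhds_unique (h1.congr' heq2) hL


omit hc0 hc in
include ha in
lemma summable_qlog' (hu : 0 < u) : Summable (fun k : ℕ => qlog a u k) := by
  obtain ⟨c, hc0, hc⟩ := exists_seg_bound ha
  exact summable_qlog ha hc0 hc hu

omit hc0 hc in
include ha in
lemma tprod_eq_exp_tsum (hu : 0 < u) :
    (∏' k : ℕ, (1 - a * ((Real.exp (-u) : ℝ) : ℂ) ^ k))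
      = Complex.exp (∑' k : ℕ, qlog a u k) := by
  have hpow : ∀ k : ℕ, ((Real.exp (-u) : ℝ) : ℂ) ^ k = Complex.exp (-(u * k)) := by
    intro k
    rw [Complex.ofReal_exp, ← Complex.exp_nat_mul]
    congr 1
    push_cast
    ring
  have hterm : ∀ k : ℕ, (1 - a * ((Real.exp (-u) : ℝ) : ℂ) ^ k) = 1 - Wf a u k := by
    intro k; rw [hpow k, Wf]; norm_cast
  rw [tprod_congr hterm]
  have := Complex.cexp_tsum_eq_tprod (f := fun n : ℕ => 1 - Wf a u n)
    (fun n => ne_Wf ha hu.le (Nat.cast_nonneg n)) (summable_qlog' ha hu)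
  exact this.symm


end

/-- For `a ∈ ℂ \ [1,∞)`, writing `q = e^{-u}`,
`(a;q)_∞ ~ (1-a)^{1/2} exp(-u⁻¹ Li₂(a))` as `u → 0⁺`. -/
theorem qPochInf_asymptotic (a : ℂ) (ha : ¬(a.im = 0 ∧ 1 ≤ a.re)) :
    Tendsto (fun u : ℝ =>
        (∏' k : ℕ, (1 - a * (Real.exp (-u) : ℂ) ^ k))
          * Complex.exp ((u : ℂ)⁻¹ * Li2 a) * (1 - a) ^ (-(1 / 2 : ℂ)))
      (nhdsWithin 0 (Set.Ioi (0:ℝ))) (nhds 1) := by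
  obtain ⟨c, hc0, hc⟩ := exists_seg_bound ha
  have h1a : (1 : ℂ) - a ≠ 0 := by
    have := seg_ne ha (right_mem_Icc.mpr zero_le_one)
    simpa using this
  set E : ℝ → ℂ := fun u => (∑' k : ℕ, qlog a u k) + (u:ℂ)⁻¹ * Li2 a
      - Complex.log (1 - a) / 2 with hE
  have hq0 : ∀ u : ℝ, qlog a u 0 = Complex.log (1 - a) := by
    intro u; rw [qlog, Wf]; norm_num
  have hEbound : ∀ u : ℝ, 0 < u → u ≤ 1 →
      ‖E u‖ ≤ (‖a‖ / c + (‖a‖)^2/c^2) * u := by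
    intro u hu hu1
    have hI := integral_qlog_Ioi ha hc0 hc hu
    have hLi : (u:ℂ)⁻¹ * Li2 a
        = -((u⁻¹ : ℝ) • (∫ r in (0:ℝ)..1, Complex.log (1 - a * r) / r)) := by
      rw [Li2, Complex.real_smul, Complex.ofReal_inv]
      ring
    have hEeq : E u = (∑' k : ℕ, qlog a u k) - (∫ t in Ioi (0:ℝ), qlog a u t)
        - qlog a u 0 / 2 := by
      rw [hE]
      simp only []
      rw [hq0 u, hI, hLi]
      ring
    rw [hEeq]
    exact key_est ha hc0 hc hu hu1
  have hEt : Tendsto E (nhdsWithin 0 (Set.Ioi (0:ℝ))) (𝓝 0) := by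
    have h2 : Tendsto (fun u : ℝ => (‖a‖ / c + (‖a‖)^2/c^2) * u)
        (𝓝 0) (𝓝 0) := by
      simpa using (continuous_const.fun_mul continuous_id).tendsto (0:ℝ)
    refine squeeze_zero_norm' ?_ (h2.mono_left nhdsWithin_le_nhds)
    filter_upwards [Ioc_mem_nhdsGT_of_mem (Set.left_mem_Ico.mpr zero_lt_one)] with u hu
    exact hEbound u hu.1 hu.2
  have hfinal : Tendsto (fun u : ℝ => Complex.exp (E u)) (nhdsWithin 0 (Set.Ioi (0:ℝ))) (𝓝 1) := by
    have h3 := (Complex.continuous_exp.tendsto (0:ℂ)).comp hEt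
    simpa [Function.comp_def] using h3
  apply hfinal.congr'
  filter_upwards [self_mem_nhdsWithin] with u hu
  rw [Set.mem_Ioi] at hu
  show Complex.exp (E u) = _
  rw [hE]
  simp only []
  rw [show (∑' k : ℕ, qlog a u k) + (u:ℂ)⁻¹ * Li2 a - Complex.log (1-a)/2
      = (∑' k : ℕ, qlog a u k) + (u:ℂ)⁻¹ * Li2 a + (Complex.log (1-a) * (-(1/2))) by ring]
  rw [Complex.exp_add, Complex.exp_add]
  rw [← tprod_eq_exp_tsum ha hu, ← Complex.cpow_def_of_ne_zero h1a]
end
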